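/- Let f ∈ BV(0,1) with 0 ≤ f ≤ 1 satisfy the level-set regularity hypothesis (H), and let (u, c₁, c₂) be a minimizer of the one-dimensional Chan–Vese functional F with u binary and nonconstant. Then every jump point x₀ ∈ J_u satisfies (c₁+c₂)/2 ∈ [min(f⁻(x₀), f⁺(x₀)), max(f⁻(x₀), f⁺(x₀))]; in particular, if f is piecewise constant then J_u ⊆ J_f. -/

import Mathlib

open scoped ENNReal NNReal
open MeasureTheory Set Filter Topology

/-- The one-dimensional Chan--Vese type functional
`F(u,c₁,c₂) = |Du|((0,1)) + ∫ 𝕀_{[0,1]}(u) + λ∫ u(c₁-f)² + (1-u)(c₂-f)²`. -/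
noncomputable def Fcv (lam : ℝ) (f : ℝ → ℝ) (u : ℝ → ℝ) (c₁ c₂ : ℝ) : ℝ≥0∞ :=
  eVariationOn u (Ioo 0 1)
    + (∫⁻ x in Ioo (0:ℝ) 1, (if u x ∈ Icc (0:ℝ) 1 then 0 else ⊤))
    + ENNReal.ofReal lam * ∫⁻ x in Ioo (0:ℝ) 1,
        ENNReal.ofReal (u x * (c₁ - f x) ^ 2 + (1 - u x) * (c₂ - f x) ^ 2)


lemma evar_le_edist_of_least {g : ℝ → ℝ} {s : Set ℝ} {a : ℝ} (ha : IsLeast s a) {v : ℝ}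
    (hg : ∀ x ∈ s, x ≠ a → g x = v) : eVariationOn g s ≤ edist (g a) v := by
  apply iSup_le
  rintro ⟨n, ⟨x, hx, hxs⟩⟩
  have key : ∀ m : ℕ, ∑ i ∈ Finset.range m, edist (g (x (i + 1))) (g (x i))
      ≤ edist (g (x 0)) (g (x m)) := by
    intro m
    induction m with
    | zero => simp
    | succ n ih =>
      rw [Finset.sum_range_succ]
      by_cases hn : x n = a
      · have h0 : x 0 = a := le_antisymm (hn ▸ hx (Nat.zero_le n)) (ha.2 (hxs 0))
        calc _ ≤ edist (g (x 0)) (g (x n)) + edist (g (x (n+1))) (g (x n)) :=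
              add_le_add_left ih _
          _ = edist (g (x 0)) (g (x (n+1))) := by rw [h0, hn, edist_self, zero_add, edist_comm]
      · have hn1 : x (n+1) ≠ a := by
          intro h
          exact hn (le_antisymm (h ▸ hx (Nat.le_succ n)) (ha.2 (hxs n)))
        rw [hg _ (hxs (n+1)) hn1, hg _ (hxs n) hn, edist_self, add_zero]
        calc _ ≤ edist (g (x 0)) (g (x n)) := ih
          _ = _ := by rw [hg _ (hxs n) hn]
  refine (key n).trans ?_
  by_cases h0 : x 0 = a <;> by_cases hn : x n = a
  · simp [h0, hn]
  · rw [h0, hg _ (hxs n) hn]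
  · rw [hn, hg _ (hxs 0) h0, edist_comm]
  · rw [hg _ (hxs 0) h0, hg _ (hxs n) hn, edist_self]; exact zero_le

lemma evar_le_edist_of_greatest {g : ℝ → ℝ} {s : Set ℝ} {a : ℝ} (ha : IsGreatest s a) {v : ℝ}
    (hg : ∀ x ∈ s, x ≠ a → g x = v) : eVariationOn g s ≤ edist (g a) v := by
  apply iSup_le
  rintro ⟨n, ⟨x, hx, hxs⟩⟩
  have key : ∀ m : ℕ, ∑ i ∈ Finset.range m, edist (g (x (i + 1))) (g (x i))
      ≤ edist (g (x 0)) (g (x m)) := by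
    intro m
    induction m with
    | zero => simp
    | succ n ih =>
      rw [Finset.sum_range_succ]
      by_cases hn : x n = a
      · have hn1 : x (n+1) = a := le_antisymm (ha.2 (hxs (n+1))) (hn ▸ hx (Nat.le_succ n))
        rw [hn1, hn, edist_self, add_zero]
        exact ih.trans (le_of_eq (by rw [hn]))
      · have h0 : x 0 ≠ a := by
          intro h
          exact hn (le_antisymm (ha.2 (hxs n)) (h ▸ hx (Nat.zero_le n)))
        calc _ ≤ edist (g (x 0)) (g (x n)) + edist (g (x (n+1))) (g (x n)) :=
              add_le_add_left ih _
          _ = edist (g (x 0)) (g (x (n+1))) := by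
              rw [hg _ (hxs 0) h0, hg _ (hxs n) hn, edist_self, zero_add, edist_comm]
  refine (key n).trans ?_
  by_cases h0 : x 0 = a <;> by_cases hn : x n = a
  · simp [h0, hn]
  · rw [h0, hg _ (hxs n) hn]
  · rw [hn, hg _ (hxs 0) h0, edist_comm]
  · rw [hg _ (hxs 0) h0, hg _ (hxs n) hn, edist_self]; exact zero_le


section
variable {g u : ℝ → ℝ}

lemma evar_decomp (g : ℝ → ℝ) {l r : ℝ} (h0 : 0 < l) (hlr : l ≤ r) (h1 : r < 1) :
    eVariationOn g (Ioo 0 1) =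
      eVariationOn g (Ioc 0 l) + eVariationOn g (Icc l r) + eVariationOn g (Ico r 1) := by
  have e2 : eVariationOn g (Icc l r ∪ Ico r 1) =
      eVariationOn g (Icc l r) + eVariationOn g (Ico r 1) :=
    eVariationOn.union g (isGreatest_Icc hlr) (isLeast_Ico h1)
  rw [Set.Icc_union_Ico_eq_Ico hlr h1] at e2
  have e1 : eVariationOn g (Ioc 0 l ∪ Ico l 1) =
      eVariationOn g (Ioc 0 l) + eVariationOn g (Ico l 1) :=
    eVariationOn.union g (isGreatest_Ioc h0) (isLeast_Ico (lt_of_le_of_lt hlr h1))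
  rw [Set.Ioc_union_Ico_eq_Ioo h0 (lt_of_le_of_lt hlr h1)] at e1
  rw [e1, e2, add_assoc]

lemma evar_icc_decomp (g : ℝ → ℝ) {l s t r : ℝ} (h1 : l ≤ s) (h2 : s ≤ t) (h3 : t ≤ r) :
    eVariationOn g (Icc l r) =
      eVariationOn g (Icc l s) + eVariationOn g (Icc s t) + eVariationOn g (Icc t r) := by
  have e2 : eVariationOn g (Icc s t ∪ Icc t r) =
      eVariationOn g (Icc s t) + eVariationOn g (Icc t r) :=
    eVariationOn.union g (isGreatest_Icc h2) (isLeast_Icc h3)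
  rw [Set.Icc_union_Icc_eq_Icc h2 h3] at e2
  have e1 : eVariationOn g (Icc l s ∪ Icc s r) =
      eVariationOn g (Icc l s) + eVariationOn g (Icc s r) :=
    eVariationOn.union g (isGreatest_Icc h1) (isLeast_Icc (h2.trans h3))
  rw [Set.Icc_union_Icc_eq_Icc h1 (h2.trans h3)] at e1
  rw [e1, e2, add_assoc]

lemma evar_icc_three_dist {l s t r : ℝ} (h1 : l ≤ s) (h2 : s ≤ t) (h3 : t ≤ r) :
    ENNReal.ofReal (dist (u l) (u s) + dist (u s) (u t) + dist (u t) (u r))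
      ≤ eVariationOn u (Icc l r) := by
  rw [evar_icc_decomp u h1 h2 h3, ENNReal.ofReal_add (by positivity) dist_nonneg,
    ENNReal.ofReal_add dist_nonneg dist_nonneg, ← edist_dist, ← edist_dist, ← edist_dist]
  gcongr
  · exact eVariationOn.edist_le u (left_mem_Icc.2 h1) (right_mem_Icc.2 h1)
  · exact eVariationOn.edist_le u (left_mem_Icc.2 h2) (right_mem_Icc.2 h2)
  · exact eVariationOn.edist_le u (left_mem_Icc.2 h3) (right_mem_Icc.2 h3)

end

lemma surgery_var {u : ℝ → ℝ} {x₀ ul ur l r v : ℝ}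
    (h0 : 0 < l) (hl : l < x₀) (hr : x₀ < r) (h1 : r < 1)
    (hul : Tendsto u (𝓝[<] x₀) (𝓝 ul)) (hur : Tendsto u (𝓝[>] x₀) (𝓝 ur))
    (hbet : dist ul v + dist v ur ≤ dist ul ur) :
    eVariationOn (fun x => if l < x ∧ x < r then v else u x) (Ioo 0 1)
      ≤ eVariationOn u (Ioo 0 1) := by
  set u' : ℝ → ℝ := fun x => if l < x ∧ x < r then v else u x with hu'def
  have hlr : l ≤ r := (hl.trans hr).le
  rcases eq_or_ne (eVariationOn u (Ioo 0 1)) ⊤ with htop | htop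
  · rw [htop]; exact le_top
  have hVfin : eVariationOn u (Icc l r) ≠ ⊤ := by
    refine fun h => htop (top_le_iff.1 ?_)
    rw [← h]
    exact eVariationOn.mono u (fun x hx => ⟨h0.trans_le hx.1, lt_of_le_of_lt hx.2 h1⟩)
  -- the three-point lower bound with limits
  have key : ENNReal.ofReal (dist (u l) ul + dist ul ur + dist ur (u r))
      ≤ eVariationOn u (Icc l r) := by
    rw [ENNReal.ofReal_le_iff_le_toReal hVfin]
    have step1 : ∀ t ∈ Ioo x₀ r,
        dist (u l) ul + dist ul (u t) + dist (u t) (u r)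
          ≤ (eVariationOn u (Icc l r)).toReal := by
      intro t ht
      have htend : Tendsto (fun s => dist (u l) (u s) + dist (u s) (u t) + dist (u t) (u r))
          (𝓝[<] x₀) (𝓝 (dist (u l) ul + dist ul (u t) + dist (u t) (u r))) := by
        exact (((tendsto_const_nhds.dist hul).add (hul.dist tendsto_const_nhds)).add
          tendsto_const_nhds)
      refine le_of_tendsto htend ?_
      filter_upwards [Ioo_mem_nhdsLT_of_mem (⟨hl, le_rfl⟩ : x₀ ∈ Ioc l x₀)] with s hs
      rw [← ENNReal.ofReal_le_iff_le_toReal hVfin]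
      exact evar_icc_three_dist hs.1.le (hs.2.le.trans ht.1.le) ht.2.le
    have htend2 : Tendsto (fun t => dist (u l) ul + dist ul (u t) + dist (u t) (u r))
        (𝓝[>] x₀) (𝓝 (dist (u l) ul + dist ul ur + dist ur (u r))) := by
      exact ((tendsto_const_nhds.add (tendsto_const_nhds.dist hur)).add
        (hur.dist tendsto_const_nhds))
    refine le_of_tendsto htend2 ?_
    filter_upwards [Ioo_mem_nhdsGT_of_mem (⟨le_rfl, hr⟩ : x₀ ∈ Ico x₀ r)] with t ht
    exact step1 t ht
  -- upper bound for the middle part of u'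
  have hul' : u' l = u l := if_neg (fun h => absurd h.1 (lt_irrefl l))
  have hur' : u' r = u r := if_neg (fun h => absurd h.2 (lt_irrefl r))
  have mid : eVariationOn u' (Icc l r) ≤ edist (u l) v + edist v (u r) := by
    have esplit : eVariationOn u' (Icc l x₀ ∪ Icc x₀ r) =
        eVariationOn u' (Icc l x₀) + eVariationOn u' (Icc x₀ r) :=
      eVariationOn.union u' (isGreatest_Icc hl.le) (isLeast_Icc hr.le)
    rw [Set.Icc_union_Icc_eq_Icc hl.le hr.le] at esplit
    rw [esplit]
    gcongr
    · have := evar_le_edist_of_least (isLeast_Icc hl.le) (g := u') (v := v) ?_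
      · rwa [hul'] at this
      · intro x hx hxl
        exact if_pos ⟨lt_of_le_of_ne hx.1 (Ne.symm hxl), lt_of_le_of_lt hx.2 hr⟩
    · have := evar_le_edist_of_greatest (isGreatest_Icc hr.le) (g := u') (v := v) ?_
      · rwa [hur', edist_comm] at this
      · intro x hx hxr
        exact if_pos ⟨lt_of_lt_of_le hl hx.1, lt_of_le_of_ne hx.2 hxr⟩
  -- combine
  rw [evar_decomp u' h0 hlr h1, evar_decomp u h0 hlr h1]
  have e1 : eVariationOn u' (Ioc 0 l) = eVariationOn u (Ioc 0 l) :=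
    eVariationOn.eq_of_eqOn (fun x hx => if_neg (fun h => absurd h.1 (not_lt.2 hx.2)))
  have e3 : eVariationOn u' (Ico r 1) = eVariationOn u (Ico r 1) :=
    eVariationOn.eq_of_eqOn (fun x hx => if_neg (fun h => absurd h.2 (not_lt.2 hx.1)))
  rw [e1, e3]
  gcongr
  refine mid.trans (le_trans ?_ key)
  rw [edist_dist, edist_dist, ← ENNReal.ofReal_add dist_nonneg dist_nonneg]
  apply ENNReal.ofReal_le_ofReal
  calc dist (u l) v + dist v (u r)
      ≤ (dist (u l) ul + dist ul v) + (dist v ur + dist ur (u r)) := by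
        gcongr <;> [exact dist_triangle _ _ _; exact dist_triangle _ _ _]
    _ = dist (u l) ul + (dist ul v + dist v ur) + dist ur (u r) := by ring
    _ ≤ dist (u l) ul + dist ul ur + dist ur (u r) := by linarith


lemma exists_good_point {P : ℝ → Prop}
    (hae : ∀ᵐ x ∂(volume.restrict (Ioo (0:ℝ) 1)), P x)
    {a b : ℝ} (hab : a < b) (hsub : Ioo a b ⊆ Ioo 0 1) : ∃ x ∈ Ioo a b, P x := by
  by_contra hcon
  push_neg at hcon
  have h1 : (volume.restrict (Ioo (0:ℝ) 1)) (Ioo a b) = 0 := by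
    refine measure_mono_null (fun x hx => ?_) hae
    exact fun hP => hcon x hx hP
  rw [Measure.restrict_apply measurableSet_Ioo,
    Set.inter_eq_self_of_subset_left hsub, Real.volume_Ioo] at h1
  simp only [ENNReal.ofReal_eq_zero] at h1
  linarith

-- extract an interval from one-sided closeness
lemma left_closeness {u : ℝ → ℝ} {x₀ L : ℝ} (hul : Tendsto u (𝓝[<] x₀) (𝓝 L))
    {ε : ℝ} (hε : 0 < ε) : ∃ a < x₀, ∀ x ∈ Ioo a x₀, dist (u x) L < ε := by
  have h := Metric.tendsto_nhds.1 hul ε hε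
  rw [Filter.eventually_iff, mem_nhdsLT_iff_exists_Ioo_subset] at h
  obtain ⟨a, ha, hsub⟩ := h
  exact ⟨a, ha, fun x hx => hsub hx⟩

lemma right_closeness {u : ℝ → ℝ} {x₀ L : ℝ} (hur : Tendsto u (𝓝[>] x₀) (𝓝 L))
    {ε : ℝ} (hε : 0 < ε) : ∃ b, x₀ < b ∧ ∀ x ∈ Ioo x₀ b, dist (u x) L < ε := by
  have h := Metric.tendsto_nhds.1 hur ε hε
  rw [Filter.eventually_iff, mem_nhdsGT_iff_exists_Ioo_subset] at h
  obtain ⟨b, hb, hsub⟩ := h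
  exact ⟨b, hb, fun x hx => hsub hx⟩

lemma limit_binary_left {u : ℝ → ℝ} {x₀ L : ℝ} (hx₀ : x₀ ∈ Ioo (0:ℝ) 1)
    (hbin : ∀ᵐ x ∂(volume.restrict (Ioo (0:ℝ) 1)), u x = 0 ∨ u x = 1)
    (hul : Tendsto u (𝓝[<] x₀) (𝓝 L)) : L = 0 ∨ L = 1 := by
  by_contra hcon
  push_neg at hcon
  have hε : 0 < min |L| |L - 1| := by
    rcases hcon with ⟨h0, h1⟩
    exact lt_min (abs_pos.2 h0) (abs_pos.2 (sub_ne_zero.2 h1))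
  obtain ⟨a, ha, hclose⟩ := left_closeness hul hε
  set a' := max a 0 with ha'
  have ha'lt : a' < x₀ := max_lt ha hx₀.1
  obtain ⟨x, hx, hPx⟩ := exists_good_point hbin ha'lt
    (fun y hy => ⟨lt_of_le_of_lt (le_max_right a 0) hy.1, hy.2.trans hx₀.2⟩)
  have hcl := hclose x ⟨lt_of_le_of_lt (le_max_left a 0) hx.1, hx.2⟩
  rcases hPx with h | h
  · rw [h] at hcl
    simp only [Real.dist_eq, zero_sub, abs_neg] at hcl
    exact absurd hcl (not_lt.2 ((min_le_left _ _)))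
  · rw [h] at hcl
    have : dist (1:ℝ) L = |L - 1| := by rw [Real.dist_eq, abs_sub_comm]
    rw [this] at hcl
    exact absurd hcl (not_lt.2 ((min_le_right _ _)))

lemma limit_binary_right {u : ℝ → ℝ} {x₀ L : ℝ} (hx₀ : x₀ ∈ Ioo (0:ℝ) 1)
    (hbin : ∀ᵐ x ∂(volume.restrict (Ioo (0:ℝ) 1)), u x = 0 ∨ u x = 1)
    (hur : Tendsto u (𝓝[>] x₀) (𝓝 L)) : L = 0 ∨ L = 1 := by
  by_contra hcon
  push_neg at hcon
  have hε : 0 < min |L| |L - 1| := by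
    rcases hcon with ⟨h0, h1⟩
    exact lt_min (abs_pos.2 h0) (abs_pos.2 (sub_ne_zero.2 h1))
  obtain ⟨b, hb, hclose⟩ := right_closeness hur hε
  set b' := min b 1 with hb'
  have hb'gt : x₀ < b' := lt_min hb hx₀.2
  obtain ⟨x, hx, hPx⟩ := exists_good_point hbin hb'gt
    (fun y hy => ⟨hx₀.1.trans hy.1, lt_of_lt_of_le hy.2 (min_le_right b 1)⟩)
  have hcl := hclose x ⟨hx.1, lt_of_lt_of_le hx.2 (min_le_left b 1)⟩
  rcases hPx with h | h
  · rw [h] at hcl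
    simp only [Real.dist_eq, zero_sub, abs_neg] at hcl
    exact absurd hcl (not_lt.2 ((min_le_left _ _)))
  · rw [h] at hcl
    have : dist (1:ℝ) L = |L - 1| := by rw [Real.dist_eq, abs_sub_comm]
    rw [this] at hcl
    exact absurd hcl (not_lt.2 ((min_le_right _ _)))

lemma memLp_modify {u : ℝ → ℝ} (hu : MemLp u 2 (volume.restrict (Ioo (0:ℝ) 1))) (l r v : ℝ) :
    MemLp (fun x => if l < x ∧ x < r then v else u x) 2 (volume.restrict (Ioo (0:ℝ) 1)) := by
  have heq : (fun x => if l < x ∧ x < r then v else u x)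
      = fun x => u x + (Ioo l r).indicator (fun y => v - u y) x := by
    funext x
    by_cases h : l < x ∧ x < r
    · rw [if_pos h, Set.indicator_of_mem (Set.mem_Ioo.2 h)]; ring
    · rw [if_neg h, Set.indicator_of_notMem (fun hc => h (Set.mem_Ioo.1 hc)), add_zero]
  rw [heq]
  exact hu.add (((memLp_const v).sub hu).indicator measurableSet_Ioo)

-- fidelity notation
noncomputable def fid (f : ℝ → ℝ) (c₁ c₂ : ℝ) (w : ℝ → ℝ) : ℝ≥0∞ :=
  ∫⁻ x in Ioo (0:ℝ) 1, ENNReal.ofReal (w x * (c₁ - f x) ^ 2 + (1 - w x) * (c₂ - f x) ^ 2)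

lemma Fcv_eq (lam : ℝ) (f u : ℝ → ℝ) (c₁ c₂ : ℝ) :
    Fcv lam f u c₁ c₂ = eVariationOn u (Ioo 0 1)
      + (∫⁻ x in Ioo (0:ℝ) 1, (if u x ∈ Icc (0:ℝ) 1 then 0 else ⊤))
      + ENNReal.ofReal lam * fid f c₁ c₂ u := rfl

lemma ind_zero {u : ℝ → ℝ}
    (hbin : ∀ᵐ x ∂(volume.restrict (Ioo (0:ℝ) 1)), u x ∈ Icc (0:ℝ) 1) :
    (∫⁻ x in Ioo (0:ℝ) 1, (if u x ∈ Icc (0:ℝ) 1 then 0 else ⊤)) = 0 := by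
  have h : ∀ᵐ x ∂(volume.restrict (Ioo (0:ℝ) 1)),
      (if u x ∈ Icc (0:ℝ) 1 then (0:ℝ≥0∞) else ⊤) = 0 := by
    filter_upwards [hbin] with x hx
    rw [if_pos hx]
  rw [lintegral_congr_ae h, lintegral_zero]

lemma fid_le_one {f : ℝ → ℝ} (hf01 : ∀ x ∈ Ioo (0:ℝ) 1, f x ∈ Icc (0:ℝ) 1)
    {c₁ c₂ : ℝ} (hc₁ : c₁ ∈ Icc (0:ℝ) 1) (hc₂ : c₂ ∈ Icc (0:ℝ) 1) {w : ℝ → ℝ}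
    (hw : ∀ᵐ x ∂(volume.restrict (Ioo (0:ℝ) 1)), w x ∈ Icc (0:ℝ) 1) :
    fid f c₁ c₂ w ≤ 1 := by
  have : fid f c₁ c₂ w ≤ ∫⁻ _x in Ioo (0:ℝ) 1, 1 := by
    apply lintegral_mono_ae
    filter_upwards [hw, ae_restrict_mem measurableSet_Ioo] with x hx hxm
    have hf := hf01 x hxm
    have h1 : (c₁ - f x) ^ 2 ≤ 1 := by nlinarith [hf.1, hf.2, hc₁.1, hc₁.2]
    have h2 : (c₂ - f x) ^ 2 ≤ 1 := by nlinarith [hf.1, hf.2, hc₂.1, hc₂.2]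
    rw [show (1 : ℝ≥0∞) = ENNReal.ofReal 1 by simp]
    apply ENNReal.ofReal_le_ofReal
    nlinarith [hx.1, hx.2, sq_nonneg (c₁ - f x), sq_nonneg (c₂ - f x)]
  simpa [lintegral_const, Measure.restrict_apply_univ, Real.volume_Ioo] using this

lemma Fcv_finite {lam : ℝ} (hlam : 0 < lam) {f u : ℝ → ℝ} {c₁ c₂ : ℝ}
    (hf01 : ∀ x ∈ Ioo (0:ℝ) 1, f x ∈ Icc (0:ℝ) 1)
    (hc₁ : c₁ ∈ Icc (0:ℝ) 1) (hc₂ : c₂ ∈ Icc (0:ℝ) 1)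
    (hmin : ∀ (u' : ℝ → ℝ) (d₁ d₂ : ℝ), MemLp u' 2 (volume.restrict (Ioo (0:ℝ) 1)) →
      d₁ ∈ Icc (0:ℝ) 1 → d₂ ∈ Icc (0:ℝ) 1 → Fcv lam f u c₁ c₂ ≤ Fcv lam f u' d₁ d₂) :
    Fcv lam f u c₁ c₂ ≤ ENNReal.ofReal lam := by
  have h0 := hmin (fun _ => 0) c₂ c₂ (memLp_const 0) hc₂ hc₂
  refine h0.trans ?_
  rw [Fcv_eq]
  have hvar : eVariationOn (fun _ => (0:ℝ)) (Ioo (0:ℝ) 1) = 0 :=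
    eVariationOn.constant_on (by
      rintro x ⟨y, _, rfl⟩ z ⟨w, _, rfl⟩; rfl)
  have hind : (∫⁻ x in Ioo (0:ℝ) 1,
      (if (fun _ => (0:ℝ)) x ∈ Icc (0:ℝ) 1 then 0 else ⊤)) = 0 :=
    ind_zero (Filter.Eventually.of_forall (fun x => ⟨le_refl 0, zero_le_one⟩))
  rw [hvar, hind, zero_add, zero_add]
  calc ENNReal.ofReal lam * fid f c₂ c₂ (fun _ => 0)
      ≤ ENNReal.ofReal lam * 1 := by
        gcongr
        exact fid_le_one hf01 hc₂ hc₂ (Filter.Eventually.of_forall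
          (fun x => ⟨le_refl 0, zero_le_one⟩))
    _ = ENNReal.ofReal lam := mul_one _

lemma partA_sub (lam : ℝ) (hlam : 0 < lam) (f u : ℝ → ℝ) (c₁ c₂ : ℝ)
    (hf01 : ∀ x ∈ Ioo (0:ℝ) 1, f x ∈ Icc (0:ℝ) 1)
    (hc₁ : c₁ ∈ Icc (0:ℝ) 1) (hc₂ : c₂ ∈ Icc (0:ℝ) 1)
    (hu : MemLp u 2 (volume.restrict (Ioo (0:ℝ) 1)))
    (hbin : ∀ᵐ x ∂(volume.restrict (Ioo (0:ℝ) 1)), u x = 0 ∨ u x = 1)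
    (hmin : ∀ (u' : ℝ → ℝ) (d₁ d₂ : ℝ), MemLp u' 2 (volume.restrict (Ioo (0:ℝ) 1)) →
      d₁ ∈ Icc (0:ℝ) 1 → d₂ ∈ Icc (0:ℝ) 1 → Fcv lam f u c₁ c₂ ≤ Fcv lam f u' d₁ d₂)
    (x₀ ul ur : ℝ)
    (hul : Tendsto u (𝓝[<] x₀) (𝓝 ul)) (hur : Tendsto u (𝓝[>] x₀) (𝓝 ur))
    (l r p q v γ : ℝ) (h0l : 0 < l) (hlx : l < x₀) (hxr : x₀ < r) (hr1 : r < 1)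
    (hv : v = 0 ∨ v = 1) (hγ : 0 < γ)
    (hpq : p < q) (hK : Ioo p q ⊆ Ioo l r) (hKx : x₀ ∉ Ioo p q)
    (hKb : ∀ᵐ x ∂(volume.restrict (Ioo (0:ℝ) 1)), x ∈ Ioo p q → u x = 1 - v)
    (hgap : ∀ x ∈ Ioo l r, x ≠ x₀ →
      v * (c₁ - f x) ^ 2 + (1 - v) * (c₂ - f x) ^ 2 + γ ≤
        (1 - v) * (c₁ - f x) ^ 2 + v * (c₂ - f x) ^ 2)
    (hbet : dist ul v + dist v ur ≤ dist ul ur) : False := by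
  set μ := volume.restrict (Ioo (0:ℝ) 1) with hμ
  set u' : ℝ → ℝ := fun x => if l < x ∧ x < r then v else u x with hu'def
  set L := ENNReal.ofReal lam with hL
  have hL0 : L ≠ 0 := by simp [hL, ENNReal.ofReal_eq_zero, not_le, hlam]
  have hLtop : L ≠ ⊤ := ENNReal.ofReal_ne_top
  -- finiteness
  have hFle := Fcv_finite hlam hf01 hc₁ hc₂ hmin
  have hFfin : Fcv lam f u c₁ c₂ ≠ ⊤ := fun h => by simp [h] at hFle
  have hVarfin : eVariationOn u (Ioo (0:ℝ) 1) ≠ ⊤ := by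
    intro h
    apply hFfin
    rw [Fcv_eq, h, eq_top_iff]
    exact le_add_right (le_add_right le_rfl)
  have hfidfin : fid f c₁ c₂ u ≠ ⊤ := by
    intro h
    apply hFfin
    rw [Fcv_eq, h, eq_top_iff, ENNReal.mul_top hL0]
    exact le_add_self
  -- indicator terms vanish
  have hIccu : ∀ᵐ x ∂μ, u x ∈ Icc (0:ℝ) 1 := by
    filter_upwards [hbin] with x hx
    rcases hx with h | h <;> rw [h] <;> constructor <;> norm_num
  have hindu := ind_zero hIccu
  have hvIcc : v ∈ Icc (0:ℝ) 1 := by rcases hv with rfl | rfl <;> constructor <;> norm_num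
  have hindu' := ind_zero (u := u') (by
    filter_upwards [hIccu] with x hx
    by_cases h : l < x ∧ x < r
    · simp only [hu'def, if_pos h]; exact hvIcc
    · simp only [hu'def, if_neg h]; exact hx)
  -- variation
  have hvar : eVariationOn u' (Ioo (0:ℝ) 1) ≤ eVariationOn u (Ioo (0:ℝ) 1) :=
    surgery_var h0l hlx hxr hr1 hul hur hbet
  -- fidelity gap
  have hae_ne : ∀ᵐ x ∂μ, x ≠ x₀ := by
    rw [ae_iff]
    have hsub : {x : ℝ | ¬ x ≠ x₀} ⊆ {x₀} := fun x hx => by simpa using not_not.1 hx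
    refine le_antisymm ?_ (zero_le)
    calc μ {x | ¬ x ≠ x₀} ≤ μ {x₀} := measure_mono hsub
      _ = volume ({x₀} ∩ Ioo 0 1) := Measure.restrict_apply (measurableSet_singleton x₀)
      _ ≤ volume {x₀} := measure_mono Set.inter_subset_left
      _ = 0 := Real.volume_singleton
  have hfid : fid f c₁ c₂ u' + ENNReal.ofReal γ * μ (Ioo p q) ≤ fid f c₁ c₂ u := by
    have hmeas : Measurable ((Ioo p q).indicator (fun _ => ENNReal.ofReal γ)) :=
      measurable_const.indicator measurableSet_Ioo
    have hadd : fid f c₁ c₂ u' + ENNReal.ofReal γ * μ (Ioo p q)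
        = ∫⁻ x in Ioo (0:ℝ) 1, (ENNReal.ofReal (u' x * (c₁ - f x) ^ 2
            + (1 - u' x) * (c₂ - f x) ^ 2)
          + (Ioo p q).indicator (fun _ => ENNReal.ofReal γ) x) := by
      rw [lintegral_add_right _ hmeas, lintegral_indicator measurableSet_Ioo,
        setLIntegral_const]
      rfl
    rw [hadd]
    apply lintegral_mono_ae
    filter_upwards [hbin, hKb, hae_ne] with x hbx hKbx hnex
    by_cases hxpq : x ∈ Ioo p q
    · have hbval : u x = 1 - v := hKbx hxpq
      have hxlr : x ∈ Ioo l r := hK hxpq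
      have hu'x : u' x = v := by simp only [hu'def, if_pos (Set.mem_Ioo.1 hxlr)]
      rw [Set.indicator_of_mem hxpq, hu'x, hbval,
        ← ENNReal.ofReal_add (by nlinarith [sq_nonneg (c₁ - f x), sq_nonneg (c₂ - f x),
          hvIcc.1, hvIcc.2]) (le_of_lt hγ)]
      apply ENNReal.ofReal_le_ofReal
      have := hgap x hxlr hnex
      nlinarith [this]
    · rw [Set.indicator_of_notMem hxpq, add_zero]
      by_cases hxlr : l < x ∧ x < r
      · have hu'x : u' x = v := by simp only [hu'def, if_pos hxlr]
        rw [hu'x]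
        apply ENNReal.ofReal_le_ofReal
        rcases hbx with h | h
        · rw [h]
          rcases hv with rfl | rfl
          · norm_num
          · have := hgap x hxlr hnex
            nlinarith [this]
        · rw [h]
          rcases hv with rfl | rfl
          · have := hgap x hxlr hnex
            nlinarith [this]
          · norm_num
      · have hu'x : u' x = u x := by simp only [hu'def, if_neg hxlr]
        rw [hu'x]
  -- assemble the contradiction
  have hμpq : μ (Ioo p q) ≠ 0 := by
    rw [hμ, Measure.restrict_apply measurableSet_Ioo,
      Set.inter_eq_self_of_subset_left (fun x hx => Set.mem_Ioo.2 ⟨h0l.trans (hK hx).1, (hK hx).2.trans hr1⟩),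
      Real.volume_Ioo]
    simp only [ne_eq, ENNReal.ofReal_eq_zero, not_le]
    linarith
  set G := ENNReal.ofReal γ * μ (Ioo p q) with hG
  have hGpos : G ≠ 0 := by
    simp only [hG, ne_eq, mul_eq_zero, not_or, ENNReal.ofReal_eq_zero, not_le]
    exact ⟨by linarith, hμpq⟩
  have hmin' := hmin u' c₁ c₂ (memLp_modify hu l r v) hc₁ hc₂
  rw [Fcv_eq, Fcv_eq, hindu, hindu', add_zero, add_zero] at hmin'
  -- hmin' : Var u + L * fid u ≤ Var u' + L * fid u'
  have hstep : eVariationOn u' (Ioo (0:ℝ) 1) + L * fid f c₁ c₂ u' + L * G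
      ≤ eVariationOn u (Ioo (0:ℝ) 1) + L * fid f c₁ c₂ u := by
    calc eVariationOn u' (Ioo (0:ℝ) 1) + L * fid f c₁ c₂ u' + L * G
        = eVariationOn u' (Ioo (0:ℝ) 1) + L * (fid f c₁ c₂ u' + G) := by
          rw [mul_add, add_assoc]
      _ ≤ eVariationOn u (Ioo (0:ℝ) 1) + L * fid f c₁ c₂ u := by
          gcongr
  have hcontr : eVariationOn u (Ioo (0:ℝ) 1) + L * fid f c₁ c₂ u + L * G
      ≤ eVariationOn u (Ioo (0:ℝ) 1) + L * fid f c₁ c₂ u := by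
    calc eVariationOn u (Ioo (0:ℝ) 1) + L * fid f c₁ c₂ u + L * G
        ≤ eVariationOn u' (Ioo (0:ℝ) 1) + L * fid f c₁ c₂ u' + L * G := by gcongr
      _ ≤ _ := hstep
  have hfin : eVariationOn u (Ioo (0:ℝ) 1) + L * fid f c₁ c₂ u ≠ ⊤ :=
    ENNReal.add_ne_top.2 ⟨hVarfin, ENNReal.mul_ne_top hLtop hfidfin⟩
  have : L * G = 0 := by
    have h2 : eVariationOn u (Ioo (0:ℝ) 1) + L * fid f c₁ c₂ u + L * G
        ≤ eVariationOn u (Ioo (0:ℝ) 1) + L * fid f c₁ c₂ u + 0 := by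
      simpa using hcontr
    have h3 := (ENNReal.add_le_add_iff_left hfin).1 h2
    exact le_antisymm (by simpa using h3) (zero_le)
  exact absurd this (mul_ne_zero hL0 hGpos)

lemma binary_close {a w : ℝ} (ha : a = 0 ∨ a = 1) (hw : w = 0 ∨ w = 1)
    (h : dist a w < 1/2) : a = w := by
  rcases ha with rfl | rfl <;> rcases hw with rfl | rfl <;>
    simp_all [Real.dist_eq] <;> linarith [abs_of_nonneg (zero_le_one (α := ℝ))]

lemma side_det {ul ur v : ℝ} (hv : v = 0 ∨ v = 1) (hUL : ul = 0 ∨ ul = 1)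
    (hUR : ur = 0 ∨ ur = 1) (hjump : ul ≠ ur) :
    (ul = 1 - v ∧ ur = v) ∨ (ul = v ∧ ur = 1 - v) := by
  rcases hv with rfl | rfl <;> rcases hUL with rfl | rfl <;> rcases hUR with rfl | rfl <;>
    revert hjump <;> norm_num

lemma partA_kernel (lam : ℝ) (hlam : 0 < lam) (f u : ℝ → ℝ) (c₁ c₂ : ℝ)
    (hf01 : ∀ x ∈ Ioo (0:ℝ) 1, f x ∈ Icc (0:ℝ) 1)
    (hc₁ : c₁ ∈ Icc (0:ℝ) 1) (hc₂ : c₂ ∈ Icc (0:ℝ) 1)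
    (hu : MemLp u 2 (volume.restrict (Ioo (0:ℝ) 1)))
    (hbin : ∀ᵐ x ∂(volume.restrict (Ioo (0:ℝ) 1)), u x = 0 ∨ u x = 1)
    (hmin : ∀ (u' : ℝ → ℝ) (d₁ d₂ : ℝ), MemLp u' 2 (volume.restrict (Ioo (0:ℝ) 1)) →
      d₁ ∈ Icc (0:ℝ) 1 → d₂ ∈ Icc (0:ℝ) 1 → Fcv lam f u c₁ c₂ ≤ Fcv lam f u' d₁ d₂)
    (x₀ ul ur : ℝ) (hx₀ : x₀ ∈ Ioo (0:ℝ) 1)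
    (hul : Tendsto u (𝓝[<] x₀) (𝓝 ul)) (hur : Tendsto u (𝓝[>] x₀) (𝓝 ur))
    (hjump : ul ≠ ur)
    (v γ δ : ℝ) (hv : v = 0 ∨ v = 1) (hγ : 0 < γ) (hδ : 0 < δ)
    (hgap : ∀ x ∈ Ioo (x₀ - δ) (x₀ + δ), x ≠ x₀ →
      v * (c₁ - f x) ^ 2 + (1 - v) * (c₂ - f x) ^ 2 + γ ≤
        (1 - v) * (c₁ - f x) ^ 2 + v * (c₂ - f x) ^ 2) : False := by
  have hUL := limit_binary_left hx₀ hbin hul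
  have hUR := limit_binary_right hx₀ hbin hur
  obtain ⟨a₁, ha₁, hcloseL⟩ := left_closeness hul (ε := 1/2) (by norm_num)
  obtain ⟨b₁, hb₁, hcloseR⟩ := right_closeness hur (ε := 1/2) (by norm_num)
  set l := max (max a₁ (x₀ - δ)) (x₀ / 2) with hldef
  set r := min (min b₁ (x₀ + δ)) ((x₀ + 1) / 2) with hrdef
  have h0l : 0 < l := lt_of_lt_of_le (by linarith [hx₀.1]) (le_max_right _ _)
  have hlx : l < x₀ := max_lt (max_lt ha₁ (by linarith)) (by linarith [hx₀.1])
  have hxr : x₀ < r := lt_min (lt_min hb₁ (by linarith)) (by linarith [hx₀.2])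
  have hr1 : r < 1 := lt_of_le_of_lt (min_le_right _ _) (by linarith [hx₀.2])
  have hlrsub : ∀ x ∈ Ioo l r, x ∈ Ioo (x₀ - δ) (x₀ + δ) := by
    intro x hx
    constructor
    · exact lt_of_le_of_lt ((le_max_right a₁ (x₀ - δ)).trans (le_max_left _ _)) hx.1
    · exact lt_of_lt_of_le hx.2 (le_trans (min_le_left _ _) (min_le_right _ _))
  have hgap' : ∀ x ∈ Ioo l r, x ≠ x₀ →
      v * (c₁ - f x) ^ 2 + (1 - v) * (c₂ - f x) ^ 2 + γ ≤
        (1 - v) * (c₁ - f x) ^ 2 + v * (c₂ - f x) ^ 2 :=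
    fun x hx hne => hgap x (hlrsub x hx) hne
  have hside : (ul = 1 - v ∧ ur = v) ∨ (ul = v ∧ ur = 1 - v) :=
    side_det hv hUL hUR hjump
  rcases hside with ⟨hulb, hurv⟩ | ⟨hulv, hurb⟩
  · -- gap side is the left: K = Ioo l x₀
    refine partA_sub lam hlam f u c₁ c₂ hf01 hc₁ hc₂ hu hbin hmin x₀ ul ur hul hur
      l r l x₀ v γ h0l hlx hxr hr1 hv hγ hlx (fun x hx => ⟨hx.1, hx.2.trans hxr⟩)
      (fun h => lt_irrefl x₀ h.2) ?_ hgap' ?_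
    · filter_upwards [hbin] with x hx hxm
      have hclose := hcloseL x ⟨lt_of_le_of_lt ((le_max_left a₁ (x₀ - δ)).trans
        (le_max_left _ _)) hxm.1, hxm.2⟩
      have := binary_close hx (hulb ▸ hUL) hclose
      rw [this, hulb]
    · rw [hurv, dist_self, add_zero]
  · -- gap side is the right: K = Ioo x₀ r
    refine partA_sub lam hlam f u c₁ c₂ hf01 hc₁ hc₂ hu hbin hmin x₀ ul ur hul hur
      l r x₀ r v γ h0l hlx hxr hr1 hv hγ hxr (fun x hx => ⟨hlx.trans hx.1, hx.2⟩)
      (fun h => lt_irrefl x₀ h.1) ?_ hgap' ?_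
    · filter_upwards [hbin] with x hx hxm
      have hclose := hcloseR x ⟨hxm.1, lt_of_lt_of_le hxm.2
        (le_trans (min_le_left _ _) (min_le_left _ _))⟩
      have := binary_close hx (hurb ▸ hUR) hclose
      rw [this, hurb]
    · rw [hulv, dist_self, zero_add]

lemma var_zero_no_jump {u : ℝ → ℝ} {x₀ ul ur : ℝ} (hx₀ : x₀ ∈ Ioo (0:ℝ) 1)
    (hul : Tendsto u (𝓝[<] x₀) (𝓝 ul)) (hur : Tendsto u (𝓝[>] x₀) (𝓝 ur))
    (hvar : eVariationOn u (Ioo (0:ℝ) 1) = 0) : ul = ur := by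
  have hconst := (eVariationOn.eq_zero_iff u).1 hvar
  have hl : ul = u x₀ := by
    refine tendsto_nhds_unique hul ?_
    have : ∀ᶠ x in 𝓝[<] x₀, u x = u x₀ := by
      filter_upwards [Ioo_mem_nhdsLT_of_mem (⟨hx₀.1, le_rfl⟩ : x₀ ∈ Ioc 0 x₀)] with x hx
      have := hconst x ⟨hx.1, hx.2.trans hx₀.2⟩ x₀ hx₀
      rwa [edist_eq_zero] at this
    exact Tendsto.congr' (this.mono (fun x hx => hx.symm)) tendsto_const_nhds
  have hr : ur = u x₀ := by
    refine tendsto_nhds_unique hur ?_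
    have : ∀ᶠ x in 𝓝[>] x₀, u x = u x₀ := by
      filter_upwards [Ioo_mem_nhdsGT_of_mem (⟨le_rfl, hx₀.2⟩ : x₀ ∈ Ico x₀ 1)] with x hx
      have := hconst x ⟨hx₀.1.trans hx.1, hx.2⟩ x₀ hx₀
      rwa [edist_eq_zero] at this
    exact Tendsto.congr' (this.mono (fun x hx => hx.symm)) tendsto_const_nhds
  rw [hl, hr]

lemma c_ne (lam : ℝ) (hlam : 0 < lam) (f u : ℝ → ℝ) (c₁ c₂ : ℝ)
    (hf01 : ∀ x ∈ Ioo (0:ℝ) 1, f x ∈ Icc (0:ℝ) 1)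
    (hc₁ : c₁ ∈ Icc (0:ℝ) 1) (hc₂ : c₂ ∈ Icc (0:ℝ) 1)
    (hbin : ∀ᵐ x ∂(volume.restrict (Ioo (0:ℝ) 1)), u x = 0 ∨ u x = 1)
    (hmin : ∀ (u' : ℝ → ℝ) (d₁ d₂ : ℝ), MemLp u' 2 (volume.restrict (Ioo (0:ℝ) 1)) →
      d₁ ∈ Icc (0:ℝ) 1 → d₂ ∈ Icc (0:ℝ) 1 → Fcv lam f u c₁ c₂ ≤ Fcv lam f u' d₁ d₂)
    (x₀ ul ur : ℝ) (hx₀ : x₀ ∈ Ioo (0:ℝ) 1)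
    (hul : Tendsto u (𝓝[<] x₀) (𝓝 ul)) (hur : Tendsto u (𝓝[>] x₀) (𝓝 ur))
    (hjump : ul ≠ ur) : c₁ ≠ c₂ := by
  intro heq
  apply hjump
  apply var_zero_no_jump hx₀ hul hur
  -- from minimality against the zero function
  have h0 := hmin (fun _ => 0) c₁ c₂ (memLp_const 0) hc₁ hc₂
  have hIccu : ∀ᵐ x ∂(volume.restrict (Ioo (0:ℝ) 1)), u x ∈ Icc (0:ℝ) 1 := by
    filter_upwards [hbin] with x hx
    rcases hx with h | h <;> rw [h] <;> constructor <;> norm_num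
  have hindu := ind_zero hIccu
  have hind0 : (∫⁻ x in Ioo (0:ℝ) 1,
      (if (fun _ => (0:ℝ)) x ∈ Icc (0:ℝ) 1 then 0 else ⊤)) = 0 :=
    ind_zero (Filter.Eventually.of_forall (fun x => ⟨le_refl 0, zero_le_one⟩))
  have hvar0 : eVariationOn (fun _ => (0:ℝ)) (Ioo (0:ℝ) 1) = 0 :=
    eVariationOn.constant_on (by rintro x ⟨y, _, rfl⟩ z ⟨w, _, rfl⟩; rfl)
  have hfideq : fid f c₁ c₂ u = fid f c₁ c₂ (fun _ => 0) := by
    apply lintegral_congr (fun x => ?_)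
    congr 1
    subst heq
    ring
  rw [Fcv_eq, Fcv_eq, hindu, hind0, hvar0, hfideq, add_zero, add_zero, zero_add] at h0
  have hfin : ENNReal.ofReal lam * fid f c₁ c₂ (fun _ => 0) ≠ ⊤ := by
    apply ENNReal.mul_ne_top ENNReal.ofReal_ne_top
    intro h
    have := fid_le_one hf01 hc₁ hc₂ (w := fun _ => 0)
      (Filter.Eventually.of_forall (fun x => ⟨le_refl 0, zero_le_one⟩))
    rw [h] at this
    exact absurd this (by simp)
  have : eVariationOn u (Ioo (0:ℝ) 1) + ENNReal.ofReal lam * fid f c₁ c₂ (fun _ => 0)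
      ≤ 0 + ENNReal.ofReal lam * fid f c₁ c₂ (fun _ => 0) := by simpa using h0
  have h2 := ENNReal.le_of_add_le_add_right hfin this
  exact le_antisymm (by simpa using h2) (zero_le)

lemma partA (lam : ℝ) (hlam : 0 < lam) (f u : ℝ → ℝ) (c₁ c₂ : ℝ)
    (hf01 : ∀ x ∈ Ioo (0:ℝ) 1, f x ∈ Icc (0:ℝ) 1)
    (hc₁ : c₁ ∈ Icc (0:ℝ) 1) (hc₂ : c₂ ∈ Icc (0:ℝ) 1)
    (hu : MemLp u 2 (volume.restrict (Ioo (0:ℝ) 1)))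
    (hbin : ∀ᵐ x ∂(volume.restrict (Ioo (0:ℝ) 1)), u x = 0 ∨ u x = 1)
    (hmin : ∀ (u' : ℝ → ℝ) (d₁ d₂ : ℝ), MemLp u' 2 (volume.restrict (Ioo (0:ℝ) 1)) →
      d₁ ∈ Icc (0:ℝ) 1 → d₂ ∈ Icc (0:ℝ) 1 → Fcv lam f u c₁ c₂ ≤ Fcv lam f u' d₁ d₂)
    (x₀ ul ur fl fr : ℝ) (hx₀ : x₀ ∈ Ioo (0:ℝ) 1)
    (hul : Tendsto u (𝓝[<] x₀) (𝓝 ul)) (hur : Tendsto u (𝓝[>] x₀) (𝓝 ur))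
    (hjump : ul ≠ ur)
    (hfl : Tendsto f (𝓝[<] x₀) (𝓝 fl)) (hfr : Tendsto f (𝓝[>] x₀) (𝓝 fr))
    (hne : c₁ ≠ c₂) :
    min fl fr ≤ (c₁ + c₂) / 2 ∧ (c₁ + c₂) / 2 ≤ max fl fr := by
  constructor
  · by_contra hlt
    push_neg at hlt
    set m := (c₁ + c₂) / 2 with hm
    set β := (min fl fr - m) / 2 with hβ
    have hβpos : 0 < β := by simp only [hβ]; linarith
    obtain ⟨a₂, ha₂, hfL⟩ := left_closeness hfl hβpos
    obtain ⟨b₂, hb₂, hfR⟩ := right_closeness hfr hβpos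
    set δ := min (min (x₀ - a₂) (b₂ - x₀)) (min x₀ (1 - x₀)) with hδdef
    have hδpos : 0 < δ :=
      lt_min (lt_min (by linarith) (by linarith)) (lt_min hx₀.1 (by linarith [hx₀.2]))
    have hδa : a₂ ≤ x₀ - δ := by
      have : δ ≤ x₀ - a₂ := le_trans (min_le_left _ _) (min_le_left _ _)
      linarith
    have hδb : x₀ + δ ≤ b₂ := by
      have : δ ≤ b₂ - x₀ := le_trans (min_le_left _ _) (min_le_right _ _)
      linarith
    have hflow : ∀ x ∈ Ioo (x₀ - δ) (x₀ + δ), x ≠ x₀ → m + β < f x := by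
      intro x hx hnex
      rcases lt_or_gt_of_ne hnex with h | h
      · have hd := hfL x ⟨lt_of_le_of_lt hδa hx.1, h⟩
        rw [Real.dist_eq, abs_lt] at hd
        have : min fl fr ≤ fl := min_le_left _ _
        simp only [hβ] at *
        linarith
      · have hd := hfR x ⟨h, lt_of_lt_of_le hx.2 hδb⟩
        rw [Real.dist_eq, abs_lt] at hd
        have : min fl fr ≤ fr := min_le_right _ _
        simp only [hβ] at *
        linarith
    rcases lt_or_gt_of_ne hne with hc | hc
    · exact partA_kernel lam hlam f u c₁ c₂ hf01 hc₁ hc₂ hu hbin hmin x₀ ul ur hx₀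
        hul hur hjump 0 (2 * (c₂ - c₁) * β) δ (Or.inl rfl)
        (mul_pos (by linarith : (0:ℝ) < 2 * (c₂ - c₁)) hβpos) hδpos
        (fun x hx hnex => by have := hflow x hx hnex; nlinarith)
    · exact partA_kernel lam hlam f u c₁ c₂ hf01 hc₁ hc₂ hu hbin hmin x₀ ul ur hx₀
        hul hur hjump 1 (2 * (c₁ - c₂) * β) δ (Or.inr rfl)
        (mul_pos (by linarith : (0:ℝ) < 2 * (c₁ - c₂)) hβpos) hδpos
        (fun x hx hnex => by have := hflow x hx hnex; nlinarith)
  · by_contra hlt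
    push_neg at hlt
    set m := (c₁ + c₂) / 2 with hm
    set β := (m - max fl fr) / 2 with hβ
    have hβpos : 0 < β := by simp only [hβ]; linarith
    obtain ⟨a₂, ha₂, hfL⟩ := left_closeness hfl hβpos
    obtain ⟨b₂, hb₂, hfR⟩ := right_closeness hfr hβpos
    set δ := min (min (x₀ - a₂) (b₂ - x₀)) (min x₀ (1 - x₀)) with hδdef
    have hδpos : 0 < δ :=
      lt_min (lt_min (by linarith) (by linarith)) (lt_min hx₀.1 (by linarith [hx₀.2]))
    have hδa : a₂ ≤ x₀ - δ := by
      have : δ ≤ x₀ - a₂ := le_trans (min_le_left _ _) (min_le_left _ _)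
      linarith
    have hδb : x₀ + δ ≤ b₂ := by
      have : δ ≤ b₂ - x₀ := le_trans (min_le_left _ _) (min_le_right _ _)
      linarith
    have fhigh : ∀ x ∈ Ioo (x₀ - δ) (x₀ + δ), x ≠ x₀ → f x < m - β := by
      intro x hx hnex
      rcases lt_or_gt_of_ne hnex with h | h
      · have hd := hfL x ⟨lt_of_le_of_lt hδa hx.1, h⟩
        rw [Real.dist_eq, abs_lt] at hd
        have : fl ≤ max fl fr := le_max_left _ _
        simp only [hβ] at *
        linarith
      · have hd := hfR x ⟨h, lt_of_lt_of_le hx.2 hδb⟩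
        rw [Real.dist_eq, abs_lt] at hd
        have : fr ≤ max fl fr := le_max_right _ _
        simp only [hβ] at *
        linarith
    rcases lt_or_gt_of_ne hne with hc | hc
    · exact partA_kernel lam hlam f u c₁ c₂ hf01 hc₁ hc₂ hu hbin hmin x₀ ul ur hx₀
        hul hur hjump 1 (2 * (c₂ - c₁) * β) δ (Or.inr rfl)
        (mul_pos (by linarith : (0:ℝ) < 2 * (c₂ - c₁)) hβpos) hδpos
        (fun x hx hnex => by have := fhigh x hx hnex; nlinarith)
    · exact partA_kernel lam hlam f u c₁ c₂ hf01 hc₁ hc₂ hu hbin hmin x₀ ul ur hx₀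
        hul hur hjump 0 (2 * (c₁ - c₂) * β) δ (Or.inl rfl)
        (mul_pos (by linarith : (0:ℝ) < 2 * (c₁ - c₂)) hβpos) hδpos
        (fun x hx hnex => by have := fhigh x hx hnex; nlinarith)

noncomputable def phiR (f : ℝ → ℝ) (c₁ c₂ : ℝ) (w : ℝ → ℝ) : ℝ :=
  ∫ x in Ioo (0:ℝ) 1, (w x * (c₁ - f x) ^ 2 + (1 - w x) * (c₂ - f x) ^ 2)

lemma f_aemeas {f : ℝ → ℝ} (hfBV : BoundedVariationOn f (Ioo 0 1)) :
    AEMeasurable f (volume.restrict (Ioo (0:ℝ) 1)) := by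
  obtain ⟨p, q, hp, hq, hf⟩ :=
    hfBV.locallyBoundedVariationOn.exists_monotoneOn_sub_monotoneOn
  have hp' := aemeasurable_restrict_of_monotoneOn (μ := volume) measurableSet_Ioo hp
  have hq' := aemeasurable_restrict_of_monotoneOn (μ := volume) measurableSet_Ioo hq
  rw [hf]
  exact hp'.sub hq'

section partB
variable {f u w : ℝ → ℝ} {c₁ c₂ : ℝ}

local notation "μ" => volume.restrict (Ioo (0:ℝ) 1)

lemma finite_mu : IsFiniteMeasure (volume.restrict (Ioo (0:ℝ) 1)) := by
  constructor
  rw [Measure.restrict_apply_univ, Real.volume_Ioo]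
  exact ENNReal.ofReal_lt_top

lemma int_bdd {g : ℝ → ℝ} (hg : AEMeasurable g μ) {C : ℝ} (hC : ∀ᵐ x ∂μ, |g x| ≤ C) :
    Integrable g μ := by
  haveI := finite_mu
  exact Integrable.mono' (integrable_const C) hg.aestronglyMeasurable
    (by filter_upwards [hC] with x hx; simpa using hx)

lemma fid_integrand_aemeas (hfm : AEMeasurable f μ) (hw : AEMeasurable w μ) :
    AEMeasurable (fun x => w x * (c₁ - f x) ^ 2 + (1 - w x) * (c₂ - f x) ^ 2) μ :=
  (hw.mul ((aemeasurable_const.sub hfm).pow aemeasurable_const)).add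
    ((aemeasurable_const.sub hw).mul ((aemeasurable_const.sub hfm).pow aemeasurable_const))

lemma fid_integrand_bdd (hf01 : ∀ x ∈ Ioo (0:ℝ) 1, f x ∈ Icc (0:ℝ) 1)
    (hc₁ : c₁ ∈ Icc (0:ℝ) 1) (hc₂ : c₂ ∈ Icc (0:ℝ) 1)
    (hbw : ∀ᵐ x ∂μ, w x = 0 ∨ w x = 1) :
    ∀ᵐ x ∂μ, |w x * (c₁ - f x) ^ 2 + (1 - w x) * (c₂ - f x) ^ 2| ≤ 1 := by
  filter_upwards [hbw, ae_restrict_mem measurableSet_Ioo] with x hx hxm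
  have hf := hf01 x hxm
  rcases hx with h | h <;> rw [h, abs_le] <;> constructor <;>
    nlinarith [hf.1, hf.2, hc₁.1, hc₁.2, hc₂.1, hc₂.2, sq_nonneg (c₁ - f x),
      sq_nonneg (c₂ - f x)]

lemma fid_integrand_nonneg (hbw : ∀ᵐ x ∂μ, w x = 0 ∨ w x = 1) :
    0 ≤ᵐ[μ] fun x => w x * (c₁ - f x) ^ 2 + (1 - w x) * (c₂ - f x) ^ 2 := by
  filter_upwards [hbw] with x hx
  simp only [Pi.zero_apply]
  rcases hx with h | h <;> rw [h] <;>
    nlinarith [sq_nonneg (c₁ - f x), sq_nonneg (c₂ - f x)]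

lemma fid_integrable (hfm : AEMeasurable f μ)
    (hf01 : ∀ x ∈ Ioo (0:ℝ) 1, f x ∈ Icc (0:ℝ) 1)
    (hc₁ : c₁ ∈ Icc (0:ℝ) 1) (hc₂ : c₂ ∈ Icc (0:ℝ) 1)
    (hw : AEMeasurable w μ) (hbw : ∀ᵐ x ∂μ, w x = 0 ∨ w x = 1) :
    Integrable (fun x => w x * (c₁ - f x) ^ 2 + (1 - w x) * (c₂ - f x) ^ 2) μ :=
  int_bdd (fid_integrand_aemeas hfm hw) (fid_integrand_bdd hf01 hc₁ hc₂ hbw)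

lemma fid_eq_ofReal_phiR (hfm : AEMeasurable f μ)
    (hf01 : ∀ x ∈ Ioo (0:ℝ) 1, f x ∈ Icc (0:ℝ) 1)
    (hc₁ : c₁ ∈ Icc (0:ℝ) 1) (hc₂ : c₂ ∈ Icc (0:ℝ) 1)
    (hw : AEMeasurable w μ) (hbw : ∀ᵐ x ∂μ, w x = 0 ∨ w x = 1) :
    fid f c₁ c₂ w = ENNReal.ofReal (phiR f c₁ c₂ w) :=
  (MeasureTheory.ofReal_integral_eq_lintegral_ofReal
    (fid_integrable hfm hf01 hc₁ hc₂ hw hbw) (fid_integrand_nonneg hbw)).symm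

lemma phiR_nonneg (hbw : ∀ᵐ x ∂μ, w x = 0 ∨ w x = 1) : 0 ≤ phiR f c₁ c₂ w :=
  integral_nonneg_of_ae (fid_integrand_nonneg hbw)



lemma vol01 : (volume.restrict (Ioo (0:ℝ) 1)) univ = 1 := by
  rw [Measure.restrict_apply_univ, Real.volume_Ioo]
  norm_num

lemma integral_decomp {A B C : ℝ → ℝ} (hA : Integrable A μ) (hB : Integrable B μ)
    (hC : Integrable C μ) (a b : ℝ) :
    ∫ x, (A x + a * B x + b * C x) ∂μ =
      (∫ x, A x ∂μ) + a * (∫ x, B x ∂μ) + b * (∫ x, C x ∂μ) := by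
  have h1 : Integrable (fun x => A x + a * B x) μ := by exact hA.add (hB.const_mul a)
  have h2 : Integrable (fun x => b * C x) μ := hC.const_mul b
  rw [integral_add h1 h2, integral_add hA (hB.const_mul a), integral_const_mul,
    integral_const_mul]

lemma uf_aemeas (hfm : AEMeasurable f μ) (hw : AEMeasurable w μ) (c : ℝ) :
    AEMeasurable (fun x => w x * (c - f x)) μ :=
  hw.mul (aemeasurable_const.sub hfm)

lemma uf_bdd (hf01 : ∀ x ∈ Ioo (0:ℝ) 1, f x ∈ Icc (0:ℝ) 1) {c : ℝ} (hc : c ∈ Icc (0:ℝ) 1)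
    (hbw : ∀ᵐ x ∂μ, w x = 0 ∨ w x = 1) :
    ∀ᵐ x ∂μ, |w x * (c - f x)| ≤ 1 := by
  filter_upwards [hbw, ae_restrict_mem measurableSet_Ioo] with x hx hxm
  have hf := hf01 x hxm
  rcases hx with h | h <;> rw [h, abs_le] <;> constructor <;>
    nlinarith [hf.1, hf.2, hc.1, hc.2]

lemma uf_integrable (hfm : AEMeasurable f μ)
    (hf01 : ∀ x ∈ Ioo (0:ℝ) 1, f x ∈ Icc (0:ℝ) 1) {c : ℝ} (hc : c ∈ Icc (0:ℝ) 1)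
    (hw : AEMeasurable w μ) (hbw : ∀ᵐ x ∂μ, w x = 0 ∨ w x = 1) :
    Integrable (fun x => w x * (c - f x)) μ :=
  int_bdd (uf_aemeas hfm hw c) (uf_bdd hf01 hc hbw)

lemma w_integrable (hw : AEMeasurable w μ) (hbw : ∀ᵐ x ∂μ, w x = 0 ∨ w x = 1) :
    Integrable w μ := by
  refine int_bdd hw (C := 1) ?_
  filter_upwards [hbw] with x hx
  rcases hx with h | h <;> rw [h] <;> norm_num

lemma onew_bin (hbw : ∀ᵐ x ∂μ, w x = 0 ∨ w x = 1) :
    ∀ᵐ x ∂μ, (1 - w x) = 0 ∨ (1 - w x) = 1 := by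
  filter_upwards [hbw] with x hx
  rcases hx with h | h <;> rw [h] <;> norm_num

lemma phiR_shift1 (hfm : AEMeasurable f μ)
    (hf01 : ∀ x ∈ Ioo (0:ℝ) 1, f x ∈ Icc (0:ℝ) 1)
    (hc₁ : c₁ ∈ Icc (0:ℝ) 1) (hc₂ : c₂ ∈ Icc (0:ℝ) 1)
    (hw : AEMeasurable w μ) (hbw : ∀ᵐ x ∂μ, w x = 0 ∨ w x = 1) (h : ℝ) :
    phiR f (c₁ + h) c₂ w = phiR f c₁ c₂ w
      + 2 * h * (∫ x, w x * (c₁ - f x) ∂μ) + h ^ 2 * (∫ x, w x ∂μ) := by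
  have heq : (fun x => w x * (c₁ + h - f x) ^ 2 + (1 - w x) * (c₂ - f x) ^ 2)
      = fun x => (w x * (c₁ - f x) ^ 2 + (1 - w x) * (c₂ - f x) ^ 2)
        + (2 * h) * (w x * (c₁ - f x)) + h ^ 2 * (w x) := by
    funext x; ring
  rw [phiR, heq, integral_decomp (fid_integrable hfm hf01 hc₁ hc₂ hw hbw)
    (uf_integrable hfm hf01 hc₁ hw hbw) (w_integrable hw hbw)]
  rfl

lemma phiR_shift2 (hfm : AEMeasurable f μ)
    (hf01 : ∀ x ∈ Ioo (0:ℝ) 1, f x ∈ Icc (0:ℝ) 1)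
    (hc₁ : c₁ ∈ Icc (0:ℝ) 1) (hc₂ : c₂ ∈ Icc (0:ℝ) 1)
    (hw : AEMeasurable w μ) (hbw : ∀ᵐ x ∂μ, w x = 0 ∨ w x = 1) (h : ℝ) :
    phiR f c₁ (c₂ + h) w = phiR f c₁ c₂ w
      + 2 * h * (∫ x, (1 - w x) * (c₂ - f x) ∂μ) + h ^ 2 * (∫ x, (1 - w x) ∂μ) := by
  have heq : (fun x => w x * (c₁ - f x) ^ 2 + (1 - w x) * (c₂ + h - f x) ^ 2)
      = fun x => (w x * (c₁ - f x) ^ 2 + (1 - w x) * (c₂ - f x) ^ 2)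
        + (2 * h) * ((1 - w x) * (c₂ - f x)) + h ^ 2 * (1 - w x) := by
    funext x; ring
  rw [phiR, heq, integral_decomp (B := fun x => (1 - w x) * (c₂ - f x)) (C := fun x => 1 - w x)
    (fid_integrable hfm hf01 hc₁ hc₂ hw hbw)
    (uf_integrable hfm hf01 hc₂ (aemeasurable_const.sub hw) (onew_bin hbw))
    (w_integrable (aemeasurable_const.sub hw) (onew_bin hbw))]
  rfl

lemma phiR_shift (hfm : AEMeasurable f μ)
    (hf01 : ∀ x ∈ Ioo (0:ℝ) 1, f x ∈ Icc (0:ℝ) 1)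
    (hc₁ : c₁ ∈ Icc (0:ℝ) 1) (hc₂ : c₂ ∈ Icc (0:ℝ) 1)
    (hw : AEMeasurable w μ) (hbw : ∀ᵐ x ∂μ, w x = 0 ∨ w x = 1) (h : ℝ) :
    phiR f (c₁ + h) (c₂ + h) w = phiR f c₁ c₂ w
      + 2 * h * (∫ x, (w x * (c₁ - f x) + (1 - w x) * (c₂ - f x)) ∂μ) + h ^ 2 := by
  have heq : (fun x => w x * (c₁ + h - f x) ^ 2 + (1 - w x) * (c₂ + h - f x) ^ 2)
      = fun x => (w x * (c₁ - f x) ^ 2 + (1 - w x) * (c₂ - f x) ^ 2)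
        + (2 * h) * ((w x * (c₁ - f x) + (1 - w x) * (c₂ - f x))) + h ^ 2 * 1 := by
    funext x; ring
  have hBint : Integrable (fun x => w x * (c₁ - f x) + (1 - w x) * (c₂ - f x)) μ := by
    exact (uf_integrable hfm hf01 hc₁ hw hbw).add
      (uf_integrable hfm hf01 hc₂ (aemeasurable_const.sub hw) (onew_bin hbw))
  rw [phiR, heq, integral_decomp (fid_integrable hfm hf01 hc₁ hc₂ hw hbw)
    hBint (integrable_const 1)]
  rw [integral_const, measureReal_def, smul_eq_mul, vol01]
  simp only [ENNReal.toReal_one, mul_one]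
  rfl

end partB


lemma ae_ne_pt (x₀ : ℝ) : ∀ᵐ x ∂(volume.restrict (Ioo (0:ℝ) 1)), x ≠ x₀ := by
  rw [ae_iff]
  have hsub : {x : ℝ | ¬ x ≠ x₀} ⊆ {x₀} := fun x hx => by simpa using not_not.1 hx
  refine le_antisymm ?_ (zero_le)
  calc (volume.restrict (Ioo (0:ℝ) 1)) {x | ¬ x ≠ x₀}
      ≤ (volume.restrict (Ioo (0:ℝ) 1)) {x₀} := measure_mono hsub
    _ = volume ({x₀} ∩ Ioo 0 1) := Measure.restrict_apply (measurableSet_singleton x₀)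
    _ ≤ volume {x₀} := measure_mono Set.inter_subset_left
    _ = 0 := Real.volume_singleton

lemma eq_on_of_locally_const {f : ℝ → ℝ} {I : Set ℝ} (hI : IsPreconnected I)
    (hloc : ∀ x ∈ I, ∀ᶠ y in 𝓝 x, f y = f x) {p : ℝ} (hp : p ∈ I) :
    ∀ y ∈ I, f y = f p := by
  set U : Set ℝ := {y | ∀ᶠ z in 𝓝 y, f z = f p} with hU
  set V : Set ℝ := {y | ∀ᶠ z in 𝓝 y, f z ≠ f p} with hV
  have hUo : IsOpen U := isOpen_setOf_eventually_nhds
  have hVo : IsOpen V := isOpen_setOf_eventually_nhds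
  have hdisj : Disjoint U V := by
    rw [Set.disjoint_left]
    intro y hyU hyV
    exact absurd hyU.self_of_nhds hyV.self_of_nhds
  have hcover : I ⊆ U ∪ V := by
    intro y hy
    by_cases hfy : f y = f p
    · exact Or.inl ((hloc y hy).mono (fun z hz => hz.trans hfy))
    · exact Or.inr ((hloc y hy).mono (fun z hz => hz ▸ hfy))
  rcases hI.subset_or_subset hUo hVo hdisj hcover with h | h
  · exact fun y hy => (h hy).self_of_nhds
  · exact absurd ((h hp).self_of_nhds) (fun hc => hc rfl)


section PartB
local notation "μ" => volume.restrict (Ioo (0:ℝ) 1)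

set_option maxHeartbeats 2000000 in
lemma partB (lam : ℝ) (hlam : 0 < lam) (f u : ℝ → ℝ) (c₁ c₂ : ℝ)
    (hfBV : BoundedVariationOn f (Ioo 0 1))
    (hf01 : ∀ x ∈ Ioo (0:ℝ) 1, f x ∈ Icc (0:ℝ) 1)
    (hc₁ : c₁ ∈ Icc (0:ℝ) 1) (hc₂ : c₂ ∈ Icc (0:ℝ) 1)
    (hu : MemLp u 2 μ)
    (hbin : ∀ᵐ x ∂μ, u x = 0 ∨ u x = 1)
    (hmin : ∀ (u' : ℝ → ℝ) (d₁ d₂ : ℝ), MemLp u' 2 μ →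
      d₁ ∈ Icc (0:ℝ) 1 → d₂ ∈ Icc (0:ℝ) 1 → Fcv lam f u c₁ c₂ ≤ Fcv lam f u' d₁ d₂)
    (x₀ ul ur : ℝ) (hx₀ : x₀ ∈ Ioo (0:ℝ) 1)
    (hul : Tendsto u (𝓝[<] x₀) (𝓝 ul)) (hur : Tendsto u (𝓝[>] x₀) (𝓝 ur))
    (hjump : ul ≠ ur)
    (δN : ℝ) (hδN : 0 < δN)
    (hNconst : ∀ x ∈ Ioo (x₀ - δN) (x₀ + δN), f x = (c₁ + c₂) / 2)
    (hne : c₁ ≠ c₂) : False := by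
  haveI := finite_mu
  set m : ℝ := (c₁ + c₂) / 2 with hm
  have hfm : AEMeasurable f μ := f_aemeas hfBV
  have hum : AEMeasurable u μ := hu.1.aemeasurable
  have hIccu : ∀ᵐ x ∂μ, u x ∈ Icc (0:ℝ) 1 := by
    filter_upwards [hbin] with x hx
    rcases hx with h | h <;> rw [h] <;> constructor <;> norm_num
  have hindu := ind_zero hIccu
  set L := ENNReal.ofReal lam with hL
  have hL0 : L ≠ 0 := by simp [hL, ENNReal.ofReal_eq_zero, not_le, hlam]
  have hLtop : L ≠ ⊤ := ENNReal.ofReal_ne_top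
  have hFle := Fcv_finite hlam hf01 hc₁ hc₂ hmin
  have hFfin : Fcv lam f u c₁ c₂ ≠ ⊤ := fun h => by simp [h] at hFle
  have hVarfin : eVariationOn u (Ioo (0:ℝ) 1) ≠ ⊤ := by
    intro h
    apply hFfin
    rw [Fcv_eq, h, eq_top_iff]
    exact le_add_right (le_add_right le_rfl)
  -- real optimality
  have hopt : ∀ d₁ ∈ Icc (0:ℝ) 1, ∀ d₂ ∈ Icc (0:ℝ) 1,
      phiR f c₁ c₂ u ≤ phiR f d₁ d₂ u := by
    intro d₁ hd₁ d₂ hd₂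
    have h := hmin u d₁ d₂ hu hd₁ hd₂
    rw [Fcv_eq, Fcv_eq] at h
    simp only [hindu, add_zero] at h
    have h2 := (ENNReal.add_le_add_iff_left hVarfin).1 h
    have h3 := (ENNReal.mul_le_mul_iff_right hL0 hLtop).1 h2
    rw [fid_eq_ofReal_phiR hfm hf01 hc₁ hc₂ hum hbin,
      fid_eq_ofReal_phiR hfm hf01 hd₁ hd₂ hum hbin] at h3
    exact (ENNReal.ofReal_le_ofReal_iff (phiR_nonneg hbin)).1 h3
  set J1 : ℝ := ∫ x, u x * (c₁ - f x) ∂μ with hJ1def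
  set J2 : ℝ := ∫ x, (1 - u x) * (c₂ - f x) ∂μ with hJ2def
  set aInt : ℝ := ∫ x, u x ∂μ with hadef
  set bInt : ℝ := ∫ x, (1 - u x) ∂μ with hbdef
  have hfae : ∀ᵐ x ∂μ, f x ∈ Icc (0:ℝ) 1 := by
    filter_upwards [ae_restrict_mem measurableSet_Ioo] with x hx
    exact hf01 x hx
  have ha0 : 0 ≤ aInt := by
    apply integral_nonneg_of_ae
    filter_upwards [hbin] with x hx
    simp only [Pi.zero_apply]
    rcases hx with h | h <;> rw [h] <;> norm_num
  have hb0 : 0 ≤ bInt := by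
    apply integral_nonneg_of_ae
    filter_upwards [hbin] with x hx
    simp only [Pi.zero_apply]
    rcases hx with h | h <;> rw [h] <;> norm_num
  have hq1 : ∀ h : ℝ, c₁ + h ∈ Icc (0:ℝ) 1 → 0 ≤ 2 * h * J1 + h ^ 2 * aInt := by
    intro h hh
    have hthis := hopt (c₁ + h) hh c₂ hc₂
    rw [phiR_shift1 hfm hf01 hc₁ hc₂ hum hbin h] at hthis
    rw [← hJ1def, ← hadef] at hthis
    linarith
  have hq2 : ∀ h : ℝ, c₂ + h ∈ Icc (0:ℝ) 1 → 0 ≤ 2 * h * J2 + h ^ 2 * bInt := by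
    intro h hh
    have hthis := hopt c₁ hc₁ (c₂ + h) hh
    rw [phiR_shift2 hfm hf01 hc₁ hc₂ hum hbin h] at hthis
    rw [← hJ2def, ← hbdef] at hthis
    linarith
  -- J1 = 0
  have keyJ : ∀ (J A c : ℝ), 0 ≤ A → c ∈ Icc (0:ℝ) 1 →
      (∀ h : ℝ, c + h ∈ Icc (0:ℝ) 1 → 0 ≤ 2 * h * J + h ^ 2 * A) →
      (c = 1 → 0 ≤ J) → (c = 0 → J ≤ 0) → J = 0 := by
    intro J A c hA hc hq hc1 hc0
    have hge : 0 ≤ J := by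
      by_cases hcc : c = 1
      · exact hc1 hcc
      · have hlt : c < 1 := lt_of_le_of_ne hc.2 hcc
        by_contra hneg
        push_neg at hneg
        set h : ℝ := min (1 - c) (-J / (A + 1)) with hhdef
        have hpos : 0 < h := lt_min (by linarith) (div_pos (by linarith) (by linarith))
        have hmem : c + h ∈ Icc (0:ℝ) 1 := by
          constructor
          · linarith [hc.1]
          · have := min_le_left (1 - c) (-J / (A + 1))
            simp only [hhdef]
            linarith [this]
        have hqq := hq h hmem
        have h2 : h ≤ -J / (A + 1) := min_le_right _ _
        have h3 : h * (A + 1) ≤ -J := by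
          rw [← le_div_iff₀ (by linarith : (0:ℝ) < A + 1)]
          exact h2
        nlinarith
    have hle : J ≤ 0 := by
      by_cases hcc : c = 0
      · exact hc0 hcc
      · have hlt : 0 < c := lt_of_le_of_ne hc.1 (Ne.symm hcc)
        by_contra hneg
        push_neg at hneg
        set h : ℝ := min c (J / (A + 1)) with hhdef
        have hpos : 0 < h := lt_min hlt (div_pos hneg (by linarith))
        have hmem : c + (-h) ∈ Icc (0:ℝ) 1 := by
          constructor
          · have := min_le_left c (J / (A + 1))
            simp only [hhdef]
            linarith [this]
          · linarith [hc.2]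
        have hqq := hq (-h) hmem
        have h2 : h ≤ J / (A + 1) := min_le_right _ _
        have h3 : h * (A + 1) ≤ J := by
          rw [← le_div_iff₀ (by linarith : (0:ℝ) < A + 1)]
          exact h2
        nlinarith
    linarith
  have hJ1 : J1 = 0 := by
    refine keyJ J1 aInt c₁ ha0 hc₁ hq1 ?_ ?_
    · intro hcc
      apply integral_nonneg_of_ae
      filter_upwards [hbin, hfae] with x hx hf
      simp only [Pi.zero_apply]
      rcases hx with h | h <;> rw [h, hcc] <;> nlinarith [hf.2]
    · intro hcc
      have hnp : (fun x => u x * (c₁ - f x)) ≤ᵐ[μ] 0 := by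
        filter_upwards [hbin, hfae] with x hx hf
        simp only [Pi.zero_apply]
        rcases hx with h | h <;> rw [h, hcc] <;> nlinarith [hf.1]
      exact integral_nonpos_of_ae hnp
  have hJ2 : J2 = 0 := by
    refine keyJ J2 bInt c₂ hb0 hc₂ hq2 ?_ ?_
    · intro hcc
      apply integral_nonneg_of_ae
      filter_upwards [hbin, hfae] with x hx hf
      simp only [Pi.zero_apply]
      rcases hx with h | h <;> rw [h, hcc] <;> nlinarith [hf.2]
    · intro hcc
      have hnp : (fun x => (1 - u x) * (c₂ - f x)) ≤ᵐ[μ] 0 := by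
        filter_upwards [hbin, hfae] with x hx hf
        simp only [Pi.zero_apply]
        rcases hx with h | h <;> rw [h, hcc] <;> nlinarith [hf.1]
      exact integral_nonpos_of_ae hnp
  -- binary limits and side intervals
  have hUL := limit_binary_left hx₀ hbin hul
  have hUR := limit_binary_right hx₀ hbin hur
  obtain ⟨a₁, ha₁, hcloseL⟩ := left_closeness hul (ε := 1/2) (by norm_num)
  obtain ⟨b₁, hb₁, hcloseR⟩ := right_closeness hur (ε := 1/2) (by norm_num)
  set l := max (max a₁ (x₀ - δN)) (x₀ / 2) with hldef
  set rr := min (min b₁ (x₀ + δN)) ((x₀ + 1) / 2) with hrdef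
  have h0l : 0 < l := lt_of_lt_of_le (by linarith [hx₀.1]) (le_max_right _ _)
  have hlx : l < x₀ := max_lt (max_lt ha₁ (by linarith)) (by linarith [hx₀.1])
  have hxr : x₀ < rr := lt_min (lt_min hb₁ (by linarith)) (by linarith [hx₀.2])
  have hr1 : rr < 1 := lt_of_le_of_lt (min_le_right _ _) (by linarith [hx₀.2])
  have hIooN : ∀ x, l < x → x < rr → x ∈ Ioo (x₀ - δN) (x₀ + δN) := by
    intro x hx1 hx2
    constructor
    · exact lt_of_le_of_lt ((le_max_right a₁ (x₀ - δN)).trans (le_max_left _ _)) hx1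
    · exact lt_of_lt_of_le hx2 (le_trans (min_le_left _ _) (min_le_right _ _))
  have hIoo01 : ∀ x, l < x → x < rr → x ∈ Ioo (0:ℝ) 1 :=
    fun x hx1 hx2 => ⟨h0l.trans hx1, hx2.trans hr1⟩
  have haeL : ∀ᵐ x ∂μ, x ∈ Ioo l x₀ → u x = ul := by
    filter_upwards [hbin] with x hx hxm
    exact (binary_close hx hUL (hcloseL x ⟨lt_of_le_of_lt ((le_max_left a₁ (x₀ - δN)).trans
      (le_max_left _ _)) hxm.1, hxm.2⟩))
  have haeR : ∀ᵐ x ∂μ, x ∈ Ioo x₀ rr → u x = ur := by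
    filter_upwards [hbin] with x hx hxm
    exact (binary_close hx hUR (hcloseR x ⟨hxm.1, lt_of_lt_of_le hxm.2
      (le_trans (min_le_left _ _) (min_le_left _ _))⟩))
  -- chunks with u = 1 and u = 0
  have hone : ∃ p q, p < q ∧ (∀ x, p < x → x < q → (l < x ∧ x < rr) ∧ x ≠ x₀) ∧
      (∀ᵐ x ∂μ, x ∈ Ioo p q → u x = 1) := by
    rcases hUL with h | h
    · -- ul = 0, so ur = 1
      have hur1 : ur = 1 := by
        rcases hUR with h2 | h2
        · exact absurd (h.trans h2.symm) hjump
        · exact h2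
      refine ⟨x₀, rr, hxr, fun x hx1 hx2 => ⟨⟨hlx.trans hx1, hx2⟩, fun hc => by
        rw [hc] at hx1; exact lt_irrefl _ hx1⟩, ?_⟩
      filter_upwards [haeR] with x hx hxm
      rw [hx hxm, hur1]
    · exact ⟨l, x₀, hlx, fun x hx1 hx2 => ⟨⟨hx1, hx2.trans hxr⟩, fun hc => by
        rw [hc] at hx2; exact lt_irrefl _ hx2⟩, by
        filter_upwards [haeL] with x hx hxm
        rw [hx hxm, h]⟩
  have hzero : ∃ p q, p < q ∧ (∀ x, p < x → x < q → (l < x ∧ x < rr) ∧ x ≠ x₀) ∧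
      (∀ᵐ x ∂μ, x ∈ Ioo p q → u x = 0) := by
    rcases hUL with h | h
    · exact ⟨l, x₀, hlx, fun x hx1 hx2 => ⟨⟨hx1, hx2.trans hxr⟩, fun hc => by
        rw [hc] at hx2; exact lt_irrefl _ hx2⟩, by
        filter_upwards [haeL] with x hx hxm
        rw [hx hxm, h]⟩
    · have hur0 : ur = 0 := by
        rcases hUR with h2 | h2
        · exact h2
        · exact absurd (h.trans h2.symm) hjump
      refine ⟨x₀, rr, hxr, fun x hx1 hx2 => ⟨⟨hlx.trans hx1, hx2⟩, fun hc => by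
        rw [hc] at hx1; exact lt_irrefl _ hx1⟩, ?_⟩
      filter_upwards [haeR] with x hx hxm
      rw [hx hxm, hur0]
  -- m values on chunks: interiority of c₁, c₂
  have hfm_chunk : ∀ x, l < x → x < rr → f x = m := fun x h1 h2 =>
    hNconst x (hIooN x h1 h2)
  obtain ⟨p1, q1, hpq1, hsub1, honeae⟩ := hone
  obtain ⟨p0, q0, hpq0, hsub0, hzeroae⟩ := hzero
  have hmne1 : c₁ ≠ m := fun hcc => hne (by rw [hm] at hcc; linarith)
  have hmne2 : c₂ ≠ m := fun hcc => hne (by rw [hm] at hcc; linarith)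
  have hc₁0 : c₁ ≠ 0 := by
    intro hcc
    have hz : ∀ᵐ x ∂μ, u x * (f x - c₁) = 0 := by
      have hnn : 0 ≤ᵐ[μ] fun x => u x * (f x - c₁) := by
        filter_upwards [hbin, hfae] with x hx hf
        simp only [Pi.zero_apply]
        rcases hx with h | h <;> rw [h, hcc] <;> nlinarith [hf.1]
      have hint : Integrable (fun x => u x * (f x - c₁)) μ := by
        have := uf_integrable hfm hf01 hc₁ hum hbin
        have heq : (fun x => u x * (f x - c₁)) = fun x => -(u x * (c₁ - f x)) := by
          funext x; ring
        rw [heq]; exact this.neg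
      have hzero : ∫ x, u x * (f x - c₁) ∂μ = 0 := by
        have heq : ∫ x, u x * (f x - c₁) ∂μ = -J1 := by
          rw [hJ1def, ← integral_neg]
          congr 1; funext x; ring
        rw [heq, hJ1]; ring
      exact (integral_eq_zero_iff_of_nonneg_ae hnn hint).1 hzero
    obtain ⟨x, hx, hP⟩ := exists_good_point (P := fun x =>
        (x ∈ Ioo p1 q1 → u x = 1) ∧ u x * (f x - c₁) = 0)
      (by filter_upwards [honeae, hz] with x h1 h2; exact ⟨h1, h2⟩) hpq1
      (fun y hy => hIoo01 y (hsub1 y hy.1 hy.2).1.1 (hsub1 y hy.1 hy.2).1.2)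
    have hu1 : u x = 1 := hP.1 hx
    have hfx : f x = m := hfm_chunk x (hsub1 x hx.1 hx.2).1.1 (hsub1 x hx.1 hx.2).1.2
    have := hP.2
    rw [hu1, hfx, one_mul, sub_eq_zero] at this
    exact hmne1 this.symm
  have hc₁1 : c₁ ≠ 1 := by
    intro hcc
    have hz : ∀ᵐ x ∂μ, u x * (c₁ - f x) = 0 := by
      have hnn : 0 ≤ᵐ[μ] fun x => u x * (c₁ - f x) := by
        filter_upwards [hbin, hfae] with x hx hf
        simp only [Pi.zero_apply]
        rcases hx with h | h <;> rw [h, hcc] <;> nlinarith [hf.2]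
      exact (integral_eq_zero_iff_of_nonneg_ae hnn
        (uf_integrable hfm hf01 hc₁ hum hbin)).1 hJ1
    obtain ⟨x, hx, hP⟩ := exists_good_point (P := fun x =>
        (x ∈ Ioo p1 q1 → u x = 1) ∧ u x * (c₁ - f x) = 0)
      (by filter_upwards [honeae, hz] with x h1 h2; exact ⟨h1, h2⟩) hpq1
      (fun y hy => hIoo01 y (hsub1 y hy.1 hy.2).1.1 (hsub1 y hy.1 hy.2).1.2)
    have hu1 : u x = 1 := hP.1 hx
    have hfx : f x = m := hfm_chunk x (hsub1 x hx.1 hx.2).1.1 (hsub1 x hx.1 hx.2).1.2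
    have := hP.2
    rw [hu1, hfx, one_mul, sub_eq_zero] at this
    exact hmne1 this
  have hc₂0 : c₂ ≠ 0 := by
    intro hcc
    have hz : ∀ᵐ x ∂μ, (1 - u x) * (f x - c₂) = 0 := by
      have hnn : 0 ≤ᵐ[μ] fun x => (1 - u x) * (f x - c₂) := by
        filter_upwards [hbin, hfae] with x hx hf
        simp only [Pi.zero_apply]
        rcases hx with h | h <;> rw [h, hcc] <;> nlinarith [hf.1]
      have hint : Integrable (fun x => (1 - u x) * (f x - c₂)) μ := by
        have := (uf_integrable hfm hf01 hc₂ (aemeasurable_const.sub hum) (onew_bin hbin)).neg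
        have heq : (fun x => (1 - u x) * (f x - c₂))
            = fun x => -((1 - u x) * (c₂ - f x)) := by funext x; ring
        rw [heq]; exact this
      have hzero : ∫ x, (1 - u x) * (f x - c₂) ∂μ = 0 := by
        have heq : ∫ x, (1 - u x) * (f x - c₂) ∂μ = -J2 := by
          rw [hJ2def, ← integral_neg]
          congr 1; funext x; ring
        rw [heq, hJ2]; ring
      exact (integral_eq_zero_iff_of_nonneg_ae hnn hint).1 hzero
    obtain ⟨x, hx, hP⟩ := exists_good_point (P := fun x =>
        (x ∈ Ioo p0 q0 → u x = 0) ∧ (1 - u x) * (f x - c₂) = 0)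
      (by filter_upwards [hzeroae, hz] with x h1 h2; exact ⟨h1, h2⟩) hpq0
      (fun y hy => hIoo01 y (hsub0 y hy.1 hy.2).1.1 (hsub0 y hy.1 hy.2).1.2)
    have hu0 : u x = 0 := hP.1 hx
    have hfx : f x = m := hfm_chunk x (hsub0 x hx.1 hx.2).1.1 (hsub0 x hx.1 hx.2).1.2
    have := hP.2
    rw [hu0, hfx, sub_zero, one_mul, sub_eq_zero] at this
    exact hmne2 this.symm
  have hc₂1 : c₂ ≠ 1 := by
    intro hcc
    have hz : ∀ᵐ x ∂μ, (1 - u x) * (c₂ - f x) = 0 := by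
      have hnn : 0 ≤ᵐ[μ] fun x => (1 - u x) * (c₂ - f x) := by
        filter_upwards [hbin, hfae] with x hx hf
        simp only [Pi.zero_apply]
        rcases hx with h | h <;> rw [h, hcc] <;> nlinarith [hf.2]
      exact (integral_eq_zero_iff_of_nonneg_ae hnn
        (uf_integrable hfm hf01 hc₂ (aemeasurable_const.sub hum) (onew_bin hbin))).1 hJ2
    obtain ⟨x, hx, hP⟩ := exists_good_point (P := fun x =>
        (x ∈ Ioo p0 q0 → u x = 0) ∧ (1 - u x) * (c₂ - f x) = 0)
      (by filter_upwards [hzeroae, hz] with x h1 h2; exact ⟨h1, h2⟩) hpq0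
      (fun y hy => hIoo01 y (hsub0 y hy.1 hy.2).1.1 (hsub0 y hy.1 hy.2).1.2)
    have hu0 : u x = 0 := hP.1 hx
    have hfx : f x = m := hfm_chunk x (hsub0 x hx.1 hx.2).1.1 (hsub0 x hx.1 hx.2).1.2
    have := hP.2
    rw [hu0, hfx, sub_zero, one_mul, sub_eq_zero] at this
    exact hmne2 this
  -- the competitor: move the jump
  have hvbin := hUL
  have hurv : ur = 1 - ul := by
    rcases hUL with h | h <;> rcases hUR with h2 | h2
    · exact absurd (h.trans h2.symm) hjump
    · rw [h, h2]; norm_num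
    · rw [h, h2]; norm_num
    · exact absurd (h.trans h2.symm) hjump
  set u' : ℝ → ℝ := fun x => if l < x ∧ x < rr then ul else u x with hu'def
  have hbet : dist ul ul + dist ul ur ≤ dist ul ur := by rw [dist_self, zero_add]
  have hvar' : eVariationOn u' (Ioo (0:ℝ) 1) ≤ eVariationOn u (Ioo (0:ℝ) 1) :=
    surgery_var h0l hlx hxr hr1 hul hur hbet
  have hmem' : MemLp u' 2 μ := memLp_modify hu l rr ul
  have hu'bin : ∀ᵐ x ∂μ, u' x = 0 ∨ u' x = 1 := by
    filter_upwards [hbin] with x hx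
    by_cases h1 : l < x ∧ x < rr
    · simp only [hu'def, if_pos h1]; exact hUL
    · simp only [hu'def, if_neg h1]; exact hx
  have hu'm : AEMeasurable u' μ := hmem'.1.aemeasurable
  have hindu' := ind_zero (u := u') (by
    filter_upwards [hu'bin] with x hx
    rcases hx with h | h <;> rw [h] <;> constructor <;> norm_num)
  set t₀ : ℝ := rr - x₀ with ht₀def
  have ht₀ : 0 < t₀ := by simp only [ht₀def]; linarith
  set Wv : ℝ := (2 * ul - 1) * (c₁ - c₂) * t₀ with hWvdef
  have hWint : Integrable (fun x => u x * (c₁ - f x) + (1 - u x) * (c₂ - f x)) μ := by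
    exact (uf_integrable hfm hf01 hc₁ hum hbin).add
      (uf_integrable hfm hf01 hc₂ (aemeasurable_const.sub hum) (onew_bin hbin))
  have hW' : ∫ x, (u' x * (c₁ - f x) + (1 - u' x) * (c₂ - f x)) ∂μ = Wv := by
    have hcongr : (fun x => u' x * (c₁ - f x) + (1 - u' x) * (c₂ - f x)) =ᵐ[μ]
        (fun x => (u x * (c₁ - f x) + (1 - u x) * (c₂ - f x))
          + (Ioo x₀ rr).indicator (fun _ => (2 * ul - 1) * (c₁ - c₂)) x) := by
      filter_upwards [haeL, haeR, ae_ne_pt x₀] with x hLae hRae hnex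
      by_cases h1 : l < x ∧ x < rr
      · have hu'x : u' x = ul := by simp only [hu'def, if_pos h1]
        rcases lt_or_gt_of_ne hnex with hlt | hgt
        · have hux : u x = ul := hLae ⟨h1.1, hlt⟩
          rw [Set.indicator_of_notMem (fun hc => absurd hc.1 (not_lt.2 hlt.le)),
            hu'x, hux, add_zero]
        · have hux : u x = ur := hRae ⟨hgt, h1.2⟩
          rw [Set.indicator_of_mem (Set.mem_Ioo.2 ⟨hgt, h1.2⟩), hu'x, hux, hurv]
          ring
      · have hu'x : u' x = u x := by simp only [hu'def, if_neg h1]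
        rw [hu'x, Set.indicator_of_notMem
          (fun hc => h1 ⟨hlx.trans hc.1, hc.2⟩), add_zero]
    have hIndInt : Integrable ((Ioo x₀ rr).indicator
        (fun _ => (2 * ul - 1) * (c₁ - c₂))) μ :=
      (integrable_const _).indicator measurableSet_Ioo
    rw [integral_congr_ae hcongr, integral_add hWint hIndInt]
    have hW0 : ∫ x, (u x * (c₁ - f x) + (1 - u x) * (c₂ - f x)) ∂μ = 0 := by
      rw [integral_add (g := fun x => (1 - u x) * (c₂ - f x)) (uf_integrable hfm hf01 hc₁ hum hbin)
        (uf_integrable hfm hf01 hc₂ (aemeasurable_const.sub hum) (onew_bin hbin)),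
        ← hJ1def, ← hJ2def, hJ1, hJ2, add_zero]
    rw [hW0, zero_add, integral_indicator_const _ measurableSet_Ioo]
    have hμIoo : μ (Ioo x₀ rr) = ENNReal.ofReal t₀ := by
      rw [Measure.restrict_apply measurableSet_Ioo,
        Set.inter_eq_self_of_subset_left (fun y hy =>
          Set.mem_Ioo.2 ⟨hx₀.1.trans hy.1, hy.2.trans hr1⟩), Real.volume_Ioo]
    rw [measureReal_def, hμIoo, ENNReal.toReal_ofReal ht₀.le, smul_eq_mul, hWvdef]
    ring
  have hWvne : Wv ≠ 0 := by
    refine mul_ne_zero (mul_ne_zero ?_ (sub_ne_zero.2 hne)) (ne_of_gt ht₀)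
    rcases hUL with h | h <;> rw [h] <;> norm_num
  have h0c₁ : 0 < c₁ := lt_of_le_of_ne hc₁.1 (Ne.symm hc₁0)
  have hc₁lt : c₁ < 1 := lt_of_le_of_ne hc₁.2 hc₁1
  have h0c₂ : 0 < c₂ := lt_of_le_of_ne hc₂.1 (Ne.symm hc₂0)
  have hc₂lt : c₂ < 1 := lt_of_le_of_ne hc₂.2 hc₂1
  set ρ : ℝ := min (min c₁ (1 - c₁)) (min (min c₂ (1 - c₂)) |Wv|) with hρdef
  have hρ : 0 < ρ := lt_min (lt_min h0c₁ (by linarith))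
    (lt_min (lt_min h0c₂ (by linarith)) (abs_pos.2 hWvne))
  have hρc₁ : ρ ≤ c₁ := le_trans (min_le_left _ _) (min_le_left _ _)
  have hρc₁' : ρ ≤ 1 - c₁ := le_trans (min_le_left _ _) (min_le_right _ _)
  have hρc₂ : ρ ≤ c₂ := le_trans (min_le_right _ _) ((min_le_left _ _).trans (min_le_left _ _))
  have hρc₂' : ρ ≤ 1 - c₂ :=
    le_trans (min_le_right _ _) ((min_le_left _ _).trans (min_le_right _ _))
  have hρW : ρ ≤ |Wv| := le_trans (min_le_right _ _) (min_le_right _ _)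
  set hh : ℝ := if 0 < Wv then -ρ else ρ with hhdef
  have habs : |hh| = ρ := by
    simp only [hhdef]
    split <;> simp [abs_of_pos hρ, abs_of_neg (neg_neg_of_pos hρ), hρ.le]
  have hd₁ : c₁ + hh ∈ Icc (0:ℝ) 1 := by
    simp only [hhdef]
    split <;> constructor <;> linarith
  have hd₂ : c₂ + hh ∈ Icc (0:ℝ) 1 := by
    simp only [hhdef]
    split <;> constructor <;> linarith
  have hneg : hh ^ 2 + 2 * hh * Wv < 0 := by
    simp only [hhdef]
    split
    · rename_i hWpos
      have : |Wv| = Wv := abs_of_pos hWpos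
      nlinarith [hρ, hρW, hWpos]
    · rename_i hWpos
      have hWneg : Wv < 0 := lt_of_le_of_ne (not_lt.1 hWpos) hWvne
      have : |Wv| = -Wv := abs_of_neg hWneg
      nlinarith [hρ, hρW, hWneg]
  have hphieq : phiR f c₁ c₂ u' = phiR f c₁ c₂ u := by
    apply integral_congr_ae
    filter_upwards [haeL, haeR, ae_ne_pt x₀] with x hLae hRae hnex
    by_cases h1 : l < x ∧ x < rr
    · have hu'x : u' x = ul := by simp only [hu'def, if_pos h1]
      rcases lt_or_gt_of_ne hnex with hlt | hgt
      · rw [hu'x, hLae ⟨h1.1, hlt⟩]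
      · have hfx : f x = m := hfm_chunk x h1.1 h1.2
        have hsq : (c₂ - m) ^ 2 = (c₁ - m) ^ 2 := by rw [hm]; ring
        rw [hu'x, hRae ⟨hgt, h1.2⟩, hfx, hsq]
        ring
    · have hu'x : u' x = u x := by simp only [hu'def, if_neg h1]
      rw [hu'x]
  have hshift := phiR_shift hfm hf01 hc₁ hc₂ hu'm hu'bin hh
  rw [hW', hphieq] at hshift
  -- final contradiction
  have hd := hmin u' (c₁ + hh) (c₂ + hh) hmem' hd₁ hd₂
  rw [Fcv_eq, Fcv_eq] at hd
  simp only [hindu, hindu', add_zero] at hd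
  have hd2 : eVariationOn u (Ioo (0:ℝ) 1) + L * fid f (c₁ + hh) (c₂ + hh) u'
      ≥ eVariationOn u (Ioo (0:ℝ) 1) + L * fid f c₁ c₂ u := by
    calc eVariationOn u (Ioo (0:ℝ) 1) + L * fid f c₁ c₂ u
        ≤ eVariationOn u' (Ioo (0:ℝ) 1) + L * fid f (c₁ + hh) (c₂ + hh) u' := hd
      _ ≤ eVariationOn u (Ioo (0:ℝ) 1) + L * fid f (c₁ + hh) (c₂ + hh) u' := by gcongr
  have hd3 := (ENNReal.add_le_add_iff_left hVarfin).1 hd2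
  have hd4 := (ENNReal.mul_le_mul_iff_right hL0 hLtop).1 hd3
  rw [fid_eq_ofReal_phiR hfm hf01 hc₁ hc₂ hum hbin,
    fid_eq_ofReal_phiR hfm hf01 hd₁ hd₂ hu'm hu'bin] at hd4
  have hd5 := (ENNReal.ofReal_le_ofReal_iff (phiR_nonneg hu'bin)).1 hd4
  rw [hshift] at hd5
  linarith

end PartB


/-- let `f ∈ BV(0,1)`, `0 ≤ f ≤ 1`, satisfy hypothesis (H), and let
`(u, c₁, c₂)` be a minimizer of the 1D Chan--Vese functional `F` with `u` binary and
nonconstant. Then every jump point `x₀ ∈ J_u` (with one-sided limits `ul ≠ ur` of `u` and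
`fl, fr` of `f`) satisfies `(c₁+c₂)/2 ∈ [min(f⁻(x₀),f⁺(x₀)), max(f⁻(x₀),f⁺(x₀))]`;
in particular, if `f` is piecewise constant then `x₀ ∈ J_f`, i.e. `J_u ⊆ J_f`. -/
theorem stmt19 (lam : ℝ) (hlam : 0 < lam) (f : ℝ → ℝ)
    (hfBV : BoundedVariationOn f (Ioo 0 1))
    (hf01 : ∀ x ∈ Ioo (0:ℝ) 1, f x ∈ Icc (0:ℝ) 1)
    (hH : ∀ c ∈ Ioo (0:ℝ) 1,
      volume (frontier {x | x ∈ Ioo (0:ℝ) 1 ∧ ContinuousAt f x ∧ f x = c}) = 0)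
    (u : ℝ → ℝ) (c₁ c₂ : ℝ) (hc₁ : c₁ ∈ Icc (0:ℝ) 1) (hc₂ : c₂ ∈ Icc (0:ℝ) 1)
    (hu : MemLp u 2 (volume.restrict (Ioo (0:ℝ) 1)))
    (hbin : ∀ᵐ x ∂(volume.restrict (Ioo (0:ℝ) 1)), u x = 0 ∨ u x = 1)
    (hnonconst : ¬ ∃ k : ℝ, ∀ᵐ x ∂(volume.restrict (Ioo (0:ℝ) 1)), u x = k)
    (hmin : ∀ (u' : ℝ → ℝ) (d₁ d₂ : ℝ), MemLp u' 2 (volume.restrict (Ioo (0:ℝ) 1)) →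
      d₁ ∈ Icc (0:ℝ) 1 → d₂ ∈ Icc (0:ℝ) 1 → Fcv lam f u c₁ c₂ ≤ Fcv lam f u' d₁ d₂)
    (x₀ ul ur fl fr : ℝ) (hx₀ : x₀ ∈ Ioo (0:ℝ) 1)
    (hul : Tendsto u (𝓝[<] x₀) (𝓝 ul)) (hur : Tendsto u (𝓝[>] x₀) (𝓝 ur))
    (hjump : ul ≠ ur)
    (hfl : Tendsto f (𝓝[<] x₀) (𝓝 fl)) (hfr : Tendsto f (𝓝[>] x₀) (𝓝 fr)) :
    (min fl fr ≤ (c₁ + c₂) / 2 ∧ (c₁ + c₂) / 2 ≤ max fl fr) ∧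
      ((∃ S : Finset ℝ, ∀ x ∈ Ioo (0:ℝ) 1, x ∉ S → ∀ᶠ y in 𝓝 x, f y = f x) →
        ¬ ContinuousAt f x₀) := by
  have hne : c₁ ≠ c₂ :=
    c_ne lam hlam f u c₁ c₂ hf01 hc₁ hc₂ hbin hmin x₀ ul ur hx₀ hul hur hjump
  have key := partA lam hlam f u c₁ c₂ hf01 hc₁ hc₂ hu hbin hmin x₀ ul ur fl fr hx₀
    hul hur hjump hfl hfr hne
  refine ⟨key, ?_⟩
  rintro ⟨S, hS⟩ hcont
  classical
  set T := S.erase x₀ with hT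
  set δ₁ : ℝ := if hTne : T.Nonempty then
      (T.image (fun s => |s - x₀|)).min' (hTne.image _) else 1 with hδ₁
  have hδ₁pos : 0 < δ₁ := by
    rw [hδ₁]
    split
    · rename_i hTne
      obtain ⟨s, hs, hval⟩ := Finset.mem_image.1 ((T.image (fun s => |s - x₀|)).min'_mem
        (hTne.image _))
      rw [← hval]
      have : s ≠ x₀ := (Finset.mem_erase.1 hs).1
      exact abs_pos.2 (sub_ne_zero.2 this)
    · norm_num
  set δN := min δ₁ (min x₀ (1 - x₀)) with hδN
  have hδNpos : 0 < δN := lt_min hδ₁pos (lt_min hx₀.1 (by linarith [hx₀.2]))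
  have hsub01 : Ioo (x₀ - δN) (x₀ + δN) ⊆ Ioo 0 1 := by
    intro x hx
    have h1 : δN ≤ x₀ := (min_le_right _ _).trans (min_le_left _ _)
    have h2 : δN ≤ 1 - x₀ := (min_le_right _ _).trans (min_le_right _ _)
    exact ⟨by have := hx.1; linarith, by have := hx.2; linarith⟩
  have hnotS : ∀ x, x ∈ Ioo (x₀ - δN) (x₀ + δN) → x ≠ x₀ → x ∉ S := by
    intro x hx hnex hxS
    have hxT : x ∈ T := Finset.mem_erase.2 ⟨hnex, hxS⟩
    have h1 : δ₁ ≤ |x - x₀| := by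
      rw [hδ₁, dif_pos ⟨x, hxT⟩]
      exact Finset.min'_le _ _ (Finset.mem_image_of_mem _ hxT)
    have h2 : |x - x₀| < δN := abs_lt.2 ⟨by have := hx.1; linarith, by have := hx.2; linarith⟩
    have h3 : δN ≤ δ₁ := min_le_left _ _
    linarith
  -- constancy on the right side
  have hlocR : ∀ x ∈ Ioo x₀ (x₀ + δN), ∀ᶠ y in 𝓝 x, f y = f x := fun x hx =>
    hS x (hsub01 ⟨by have := hx.1; linarith [hδNpos], hx.2⟩)
      (hnotS x ⟨by have := hx.1; linarith [hδNpos], hx.2⟩ (ne_of_gt hx.1))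
  have hmidR : x₀ + δN / 2 ∈ Ioo x₀ (x₀ + δN) := ⟨by linarith, by linarith⟩
  have hconstR := eq_on_of_locally_const isPreconnected_Ioo hlocR hmidR
  have hlocL : ∀ x ∈ Ioo (x₀ - δN) x₀, ∀ᶠ y in 𝓝 x, f y = f x := fun x hx =>
    hS x (hsub01 ⟨hx.1, by have := hx.2; linarith [hδNpos]⟩)
      (hnotS x ⟨hx.1, by have := hx.2; linarith [hδNpos]⟩ (ne_of_lt hx.2))
  have hmidL : x₀ - δN / 2 ∈ Ioo (x₀ - δN) x₀ := ⟨by linarith, by linarith⟩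
  have hconstL := eq_on_of_locally_const isPreconnected_Ioo hlocL hmidL
  -- identify limits
  have hfrval : fr = f (x₀ + δN / 2) := by
    refine tendsto_nhds_unique hfr ?_
    have hev : ∀ᶠ x in 𝓝[>] x₀, f x = f (x₀ + δN / 2) := by
      filter_upwards [Ioo_mem_nhdsGT_of_mem (⟨le_rfl, by linarith⟩ : x₀ ∈ Ico x₀ (x₀ + δN))]
        with x hx
      exact hconstR x hx
    exact Tendsto.congr' (hev.mono (fun x hx => hx.symm)) tendsto_const_nhds
  have hflval : fl = f (x₀ - δN / 2) := by
    refine tendsto_nhds_unique hfl ?_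
    have hev : ∀ᶠ x in 𝓝[<] x₀, f x = f (x₀ - δN / 2) := by
      filter_upwards [Ioo_mem_nhdsLT_of_mem (⟨by linarith, le_rfl⟩ : x₀ ∈ Ioc (x₀ - δN) x₀)]
        with x hx
      exact hconstL x hx
    exact Tendsto.congr' (hev.mono (fun x hx => hx.symm)) tendsto_const_nhds
  have hfrx : fr = f x₀ :=
    tendsto_nhds_unique hfr (hcont.tendsto.mono_left nhdsWithin_le_nhds)
  have hflx : fl = f x₀ :=
    tendsto_nhds_unique hfl (hcont.tendsto.mono_left nhdsWithin_le_nhds)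
  have hmval : f x₀ = (c₁ + c₂) / 2 := by
    have h1 := key.1
    have h2 := key.2
    rw [hflx, hfrx, min_self] at h1
    rw [hflx, hfrx, max_self] at h2
    linarith
  have hNconst : ∀ x ∈ Ioo (x₀ - δN) (x₀ + δN), f x = (c₁ + c₂) / 2 := by
    intro x hx
    rcases lt_trichotomy x x₀ with h | h | h
    · rw [hconstL x ⟨hx.1, h⟩, ← hflval, hflx, hmval]
    · rw [h, hmval]
    · rw [hconstR x ⟨h, hx.2⟩, ← hfrval, hfrx, hmval]
  exact partB lam hlam f u c₁ c₂ hfBV hf01 hc₁ hc₂ hu hbin hmin x₀ ul ur hx₀ hul hur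
    hjump δN hδNpos hNconst hne
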